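/- arXiv:0706.0854 — 6 statements merged into one kernel-verified Lean document; each statement's English description precedes it below -/
import Mathlib

section
/- Let n ≥ 3, t ∈ ℂ, t ≠ 0, and A = diag(0,…,0,t,t) ∈ M_n(ℂ). Then for every B ∈ M_n(ℂ) and h ∈ ℂ: the coefficient of h in σ_1(A+hB) is Σ_{j=1}^n b_{jj}; the coefficient of h in σ_2(A+hB) is 2t Σ_{j=1}^{n−2} b_{jj} + t(b_{n−1,n−1} + b_{nn}); the coefficient of h in σ_3(A+hB) is t² Σ_{j=1}^{n−2} b_{jj}. In particular the linear relation (dσ_3)_A = t (dσ_2)_A − t² (dσ_1)_A holds between these differentials. -/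
open Polynomial Finset in
lemma det_updateRow_diagonal {R : Type*} [CommRing R] {m : Type*} [DecidableEq m] [Fintype m]
    (d : m → R) (i : m) (v : m → R) :
    ((Matrix.diagonal d).updateRow i v).det = v i * ∏ k ∈ Finset.univ.erase i, d k := by
  have hv : v = ∑ j, Pi.single j (v j) := (Finset.univ_sum_single v).symm
  have : ((Matrix.diagonal d).updateRow i v).det
      = Matrix.detRowAlternating.toMultilinearMap
          (Function.update (Matrix.diagonal d) i (∑ j, Pi.single j (v j))) := by
    rw [← hv]; rfl
  rw [this, (Matrix.detRowAlternating).toMultilinearMap.map_update_sum Finset.univ i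
      (fun j => Pi.single j (v j)) (Matrix.diagonal d)]
  have hterm : ∀ j : m, Matrix.detRowAlternating.toMultilinearMap
      (Function.update (Matrix.diagonal d) i (Pi.single j (v j)))
      = if j = i then v i * ∏ k ∈ Finset.univ.erase i, d k else 0 := by
    intro j
    by_cases hj : j = i
    · subst hj
      rw [if_pos rfl]
      have heq : Function.update (Matrix.diagonal d) j (Pi.single j (v j))
          = Matrix.diagonal (Function.update d j (v j)) := by
        ext k l
        rcases eq_or_ne k j with rfl | hk
        · rcases eq_or_ne k l with rfl | hl
          · simp [Function.update, Matrix.diagonal]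
          · simp [Function.update, Matrix.diagonal, Pi.single_eq_of_ne (Ne.symm hl), hl]
        · simp [Function.update, hk, Matrix.diagonal, Function.update_of_ne]
      rw [heq]
      show (Matrix.diagonal (Function.update d j (v j))).det = _
      rw [Matrix.det_diagonal, Finset.prod_update_of_mem (Finset.mem_univ j), ← Finset.erase_eq]
    · rw [if_neg hj]
      show (Matrix.of (Function.update (Matrix.diagonal d) i (Pi.single j (v j)))).det = 0
      apply Matrix.det_eq_zero_of_column_eq_zero i
      intro k
      rcases eq_or_ne k i with rfl | hk
      · simp [Function.update, Pi.single_eq_of_ne (Ne.symm hj)]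
      · simp [Function.update, hk, Matrix.diagonal_apply_ne _ hk]
  simp only [hterm]
  rw [Finset.sum_ite_eq' Finset.univ i]
  simp

/-- `sigma j M`: the `j`-th elementary symmetric function of the eigenvalues of `M`. -/
noncomputable def sigma {n : ℕ} (j : ℕ) (M : Matrix (Fin n) (Fin n) ℂ) : ℂ :=
  (-1 : ℂ) ^ j * M.charpoly.coeff (n - j)

open Polynomial Matrix Finset in
lemma sigma_deriv (n : ℕ) (j : ℕ) (A B : Matrix (Fin n) (Fin n) ℂ) (d : Fin n → ℂ)
    (hA : A = Matrix.diagonal d) :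
    deriv (fun h : ℂ => sigma j (A + h • B)) 0 =
      ∑ i : Fin n, (-1 : ℂ) ^ j *
        (-(B i i) * ((∏ k ∈ Finset.univ.erase i, ((X : ℂ[X]) - C (d k))).coeff (n - j))) := by
  classical
  set N : Matrix (Fin n) (Fin n) ℂ[X] := -(B.map C) with hN
  set M : Matrix (Fin n) (Fin n) ℂ[X] := charmatrix A with hM
  set g : Finset (Fin n) → ℂ := fun S =>
    (-1 : ℂ) ^ j * ((Matrix.of (S.piecewise (fun k => N k) (fun k => M k))).det).coeff (n - j)
    with hg
  have key : ∀ h : ℂ, sigma j (A + h • B) = ∑ S : Finset (Fin n), h ^ S.card * g S := by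
    intro h
    have hrow : charmatrix (A + h • B)
        = Matrix.of ((fun k => (C h : ℂ[X]) • N k) + (fun k => M k)) := by
      refine Matrix.ext fun k l => ?_
      simp only [charmatrix_apply, Matrix.of_apply, Pi.add_apply, Pi.smul_apply, hN, hM,
        Matrix.add_apply, Matrix.smul_apply, Matrix.neg_apply, Matrix.map_apply,
        smul_eq_mul, map_add, Polynomial.C_mul]
      ring
    have hdet : (A + h • B).charpoly = ∑ S : Finset (Fin n),
        (C h) ^ S.card * (Matrix.of (S.piecewise (fun k => N k) (fun k => M k))).det := by
      rw [Matrix.charpoly, hrow]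
      show Matrix.detRowAlternating.toMultilinearMap
          ((fun k => (C h : ℂ[X]) • N k) + (fun k => M k)) = _
      rw [MultilinearMap.map_add_univ]
      refine Finset.sum_congr rfl fun S _ => ?_
      have hpw : S.piecewise (fun k => (C h : ℂ[X]) • N k) (fun k => M k)
          = S.piecewise (fun k => (C h : ℂ[X]) • (S.piecewise (fun k => N k) (fun k => M k)) k)
              (S.piecewise (fun k => N k) (fun k => M k)) := by
        funext k
        by_cases hk : k ∈ S <;>
          simp [Finset.piecewise_eq_of_mem _ _ _, Finset.piecewise_eq_of_notMem _ _ _, hk]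
      rw [hpw, MultilinearMap.map_piecewise_smul]
      simp only [Finset.prod_const, smul_eq_mul]
      rfl
    rw [sigma, hdet, Polynomial.finset_sum_coeff, Finset.mul_sum]
    refine Finset.sum_congr rfl fun S _ => ?_
    rw [← C_pow, Polynomial.coeff_C_mul, hg]
    ring
  have hfun : (fun h : ℂ => sigma j (A + h • B))
      = fun h : ℂ => ∑ S : Finset (Fin n), h ^ S.card * g S := funext key
  rw [hfun]
  have hd : HasDerivAt (fun h : ℂ => ∑ S : Finset (Fin n), h ^ S.card * g S)
      (∑ S : Finset (Fin n), ((S.card : ℂ) * 0 ^ (S.card - 1)) * g S) 0 :=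
    HasDerivAt.fun_sum fun S _ => (hasDerivAt_pow S.card 0).mul_const (g S)
  rw [hd.deriv]
  have h2 : ∀ S : Finset (Fin n), ((S.card : ℂ) * 0 ^ (S.card - 1)) * g S
      = if S.card = 1 then g S else 0 := by
    intro S
    match hc : S.card with
    | 0 => simp
    | 1 => simp
    | (k+2) => simp [pow_succ]
  rw [Finset.sum_congr rfl (fun S _ => h2 S), ← Finset.sum_filter]
  have h3 : (Finset.univ : Finset (Finset (Fin n))).filter (fun S => S.card = 1)
      = (Finset.univ : Finset (Fin n)).map ⟨singleton, Finset.singleton_injective⟩ := by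
    rw [← Finset.powerset_univ, ← Finset.powersetCard_eq_filter, Finset.powersetCard_one]
  rw [h3, Finset.sum_map]
  refine Finset.sum_congr rfl fun i _ => ?_
  have hMd : M = Matrix.diagonal (fun k => (X : ℂ[X]) - C (d k)) := by
    ext k l
    rcases eq_or_ne k l with rfl | hkl
    · simp [hM, hA, charmatrix_apply_eq, Matrix.diagonal_apply_eq]
    · simp [hM, hA, charmatrix_apply_ne _ _ _ hkl, Matrix.diagonal_apply_ne _ hkl]
  have h1 : Matrix.of ((({i} : Finset (Fin n))).piecewise (fun k => N k) (fun k => M k))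
      = (Matrix.diagonal (fun k => (X : ℂ[X]) - C (d k))).updateRow i (N i) := by
    ext k l
    by_cases hk : k = i
    · subst hk
      simp [Finset.piecewise_eq_of_mem, Matrix.updateRow_self]
    · simp [Finset.piecewise_eq_of_notMem _ _ _ (by simp [hk] : k ∉ ({i} : Finset (Fin n))),
        Matrix.updateRow_ne hk, hMd]
  show g {i} = _
  rw [hg]
  simp only [h1, det_updateRow_diagonal]
  have hNii : N i i = -C (B i i) := by simp [hN]
  rw [hNii, neg_mul, Polynomial.coeff_neg, Polynomial.coeff_C_mul]
  ring

open Polynomial Finset in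
lemma prod_erase_eq (m : ℕ) (t : ℂ) (i : Fin (m + 3)) :
    (∏ k ∈ Finset.univ.erase i, ((X : ℂ[X]) - C (if (k : ℕ) < m + 1 then 0 else t)))
      = if (i : ℕ) < m + 1 then X ^ m * (X - C t) ^ 2 else X ^ (m + 1) * (X - C t) := by
  classical
  set p : Fin (m + 3) → Prop := fun k => (k : ℕ) < m + 1 with hp
  have hsplit := Finset.prod_filter_mul_prod_filter_not (Finset.univ.erase i) p
      (fun k => (X : ℂ[X]) - C (if (k : ℕ) < m + 1 then 0 else t))
  rw [← hsplit]
  have h1 : (∏ k ∈ (Finset.univ.erase i).filter p,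
        ((X : ℂ[X]) - C (if (k : ℕ) < m + 1 then 0 else t)))
      = X ^ ((Finset.univ.erase i).filter p).card := by
    rw [← Finset.prod_const]
    refine Finset.prod_congr rfl fun k hk => ?_
    have : (k : ℕ) < m + 1 := (Finset.mem_filter.mp hk).2
    simp [this]
  have h2 : (∏ k ∈ (Finset.univ.erase i).filter (fun k => ¬ p k),
        ((X : ℂ[X]) - C (if (k : ℕ) < m + 1 then 0 else t)))
      = (X - C t) ^ ((Finset.univ.erase i).filter (fun k => ¬ p k)).card := by
    rw [← Finset.prod_const]
    refine Finset.prod_congr rfl fun k hk => ?_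
    have : ¬ (k : ℕ) < m + 1 := (Finset.mem_filter.mp hk).2
    simp [this]
  have hFcard : ((Finset.univ : Finset (Fin (m + 3))).filter p).card = m + 1 := by
    have : (Finset.univ : Finset (Fin (m + 3))).filter p
        = Finset.Iio (⟨m + 1, by omega⟩ : Fin (m + 3)) := by
      ext k; simp [hp, Fin.lt_def]
    rw [this, Fin.card_Iio]
  have hFc : (Finset.univ : Finset (Fin (m + 3))).filter (fun k => ¬ p k)
      = {(⟨m + 1, by omega⟩ : Fin (m + 3)), ⟨m + 2, by omega⟩} := by
    ext k
    have := k.isLt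
    simp [hp, Fin.ext_iff]
    omega
  have hFccard : ((Finset.univ : Finset (Fin (m + 3))).filter (fun k => ¬ p k)).card = 2 := by
    rw [hFc, Finset.card_insert_of_notMem (by simp [Fin.ext_iff]), Finset.card_singleton]
  rw [h1, h2, Finset.filter_erase, Finset.filter_erase]
  by_cases hi : p i
  · have hc1 : ((Finset.univ.filter p).erase i).card = m := by
      rw [Finset.card_erase_of_mem (by simp [hi]), hFcard]
      omega
    have hc2 : ((Finset.univ.filter (fun k => ¬ p k)).erase i).card = 2 := by
      rw [Finset.erase_eq_of_notMem (by simp [hi]), hFccard]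
    rw [hc1, hc2, if_pos hi]
  · have hc1 : ((Finset.univ.filter p).erase i).card = m + 1 := by
      rw [Finset.erase_eq_of_notMem (by simp [hi]), hFcard]
    have hc2 : ((Finset.univ.filter (fun k => ¬ p k)).erase i).card = 1 := by
      rw [Finset.card_erase_of_mem (by simp [hi]), hFccard]
    rw [hc1, hc2, if_neg hi, pow_one]

theorem diff_sigma_at_diag_tt (n : ℕ) (hn : 3 ≤ n) (t : ℂ) (ht : t ≠ 0)
    (A : Matrix (Fin n) (Fin n) ℂ)
    (hA : A = Matrix.diagonal (fun j : Fin n => if (j : ℕ) < n - 2 then 0 else t))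
    (B : Matrix (Fin n) (Fin n) ℂ) :
    deriv (fun h : ℂ => sigma 1 (A + h • B)) 0 = ∑ j : Fin n, B j j ∧
    deriv (fun h : ℂ => sigma 2 (A + h • B)) 0 =
      2 * t * (∑ j ∈ Finset.univ.filter (fun j : Fin n => (j : ℕ) < n - 2), B j j) +
        t * (B ⟨n - 2, by omega⟩ ⟨n - 2, by omega⟩ + B ⟨n - 1, by omega⟩ ⟨n - 1, by omega⟩) ∧
    deriv (fun h : ℂ => sigma 3 (A + h • B)) 0 =
      t ^ 2 * (∑ j ∈ Finset.univ.filter (fun j : Fin n => (j : ℕ) < n - 2), B j j) ∧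
    deriv (fun h : ℂ => sigma 3 (A + h • B)) 0 =
      t * deriv (fun h : ℂ => sigma 2 (A + h • B)) 0 -
        t ^ 2 * deriv (fun h : ℂ => sigma 1 (A + h • B)) 0 := by
  classical
  obtain ⟨m, rfl⟩ : ∃ m, n = m + 3 := ⟨n - 3, by omega⟩
  have e2 : m + 3 - 2 = m + 1 := by omega
  have e1 : m + 3 - 1 = m + 2 := by omega
  have e3 : m + 3 - 3 = m := by omega
  open Polynomial in
  have hA' : A = Matrix.diagonal (fun k : Fin (m + 3) => if (k : ℕ) < m + 1 then 0 else t) := by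
    rw [hA]; simp only [e2]
  have hder : ∀ jj : ℕ, deriv (fun h : ℂ => sigma jj (A + h • B)) 0
      = ∑ i : Fin (m + 3), (-1 : ℂ) ^ jj * (-(B i i) *
          ((if (i : ℕ) < m + 1 then (X : ℂ[X]) ^ m * (X - Polynomial.C t) ^ 2
            else (X : ℂ[X]) ^ (m + 1) * (X - Polynomial.C t)).coeff (m + 3 - jj))) := by
    intro jj
    rw [sigma_deriv (m + 3) jj A B _ hA']
    refine Finset.sum_congr rfl fun i _ => ?_
    rw [prod_erase_eq m t i]
  have cA : ∀ k, ((X : ℂ[X]) ^ m * (X - Polynomial.C t) ^ 2).coeff k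
      = if m ≤ k then ((X - Polynomial.C t) ^ 2).coeff (k - m) else 0 := fun k => by
    rw [mul_comm, Polynomial.coeff_mul_X_pow']
  have cB : ∀ k, ((X : ℂ[X]) ^ (m + 1) * (X - Polynomial.C t)).coeff k
      = if m + 1 ≤ k then ((X : ℂ[X]) - Polynomial.C t).coeff (k - (m + 1)) else 0 := fun k => by
    rw [mul_comm, Polynomial.coeff_mul_X_pow']
  have hq2 : ((X : ℂ[X]) - Polynomial.C t) ^ 2
      = X ^ 2 - Polynomial.C (2 * t) * X + Polynomial.C (t * t) := by
    rw [Polynomial.C_mul, Polynomial.C_mul, map_ofNat]; ring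
  have q22 : (((X : ℂ[X]) - Polynomial.C t) ^ 2).coeff 2 = 1 := by
    simp [hq2, Polynomial.coeff_C]
  have q21 : (((X : ℂ[X]) - Polynomial.C t) ^ 2).coeff 1 = -(2 * t) := by
    simp [hq2, Polynomial.coeff_C]
  have q20 : (((X : ℂ[X]) - Polynomial.C t) ^ 2).coeff 0 = t * t := by
    simp [hq2, Polynomial.coeff_C]
  have q11 : ((X : ℂ[X]) - Polynomial.C t).coeff 1 = 1 := by simp
  have q10 : ((X : ℂ[X]) - Polynomial.C t).coeff 0 = -t := by simp
  -- values of the relevant coefficients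
  have vA2 : ((X : ℂ[X]) ^ m * (X - Polynomial.C t) ^ 2).coeff (m + 2) = 1 := by
    rw [cA, if_pos (by omega), show m + 2 - m = 2 by omega, q22]
  have vB2 : ((X : ℂ[X]) ^ (m + 1) * (X - Polynomial.C t)).coeff (m + 2) = 1 := by
    rw [cB, if_pos (by omega), show m + 2 - (m + 1) = 1 by omega, q11]
  have vA1 : ((X : ℂ[X]) ^ m * (X - Polynomial.C t) ^ 2).coeff (m + 1) = -(2 * t) := by
    rw [cA, if_pos (by omega), show m + 1 - m = 1 by omega, q21]
  have vB1 : ((X : ℂ[X]) ^ (m + 1) * (X - Polynomial.C t)).coeff (m + 1) = -t := by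
    rw [cB, if_pos (by omega), show m + 1 - (m + 1) = 0 by omega, q10]
  have vA0 : ((X : ℂ[X]) ^ m * (X - Polynomial.C t) ^ 2).coeff m = t * t := by
    rw [cA, if_pos (by omega), show m - m = 0 by omega, q20]
  have vB0 : ((X : ℂ[X]) ^ (m + 1) * (X - Polynomial.C t)).coeff m = 0 := by
    rw [cB, if_neg (by omega)]
  have hFc : (Finset.univ : Finset (Fin (m + 3))).filter (fun k : Fin (m + 3) => ¬ (k : ℕ) < m + 1)
      = {(⟨m + 1, by omega⟩ : Fin (m + 3)), ⟨m + 2, by omega⟩} := by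
    ext k
    have := k.isLt
    simp [Fin.ext_iff]
    omega
  have hne : (⟨m + 1, by omega⟩ : Fin (m + 3)) ≠ ⟨m + 2, by omega⟩ := by
    simp [Fin.ext_iff]
  have d1 : deriv (fun h : ℂ => sigma 1 (A + h • B)) 0 = ∑ j : Fin (m + 3), B j j := by
    rw [hder 1]
    simp only [e1]
    refine Finset.sum_congr rfl fun i _ => ?_
    split
    · rw [vA2]; ring
    · rw [vB2]; ring
  have d2 : deriv (fun h : ℂ => sigma 2 (A + h • B)) 0 =
      2 * t * (∑ j ∈ Finset.univ.filter (fun j : Fin (m + 3) => (j : ℕ) < m + 1), B j j) +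
        t * (B ⟨m + 1, by omega⟩ ⟨m + 1, by omega⟩ + B ⟨m + 2, by omega⟩ ⟨m + 2, by omega⟩) := by
    rw [hder 2]
    simp only [e2]
    have hterm : ∀ i : Fin (m + 3), (-1 : ℂ) ^ 2 * (-(B i i) *
        ((if (i : ℕ) < m + 1 then (X : ℂ[X]) ^ m * (X - Polynomial.C t) ^ 2
          else (X : ℂ[X]) ^ (m + 1) * (X - Polynomial.C t)).coeff (m + 1)))
        = if (i : ℕ) < m + 1 then 2 * t * B i i else t * B i i := by
      intro i
      split
      · rw [vA1]; ring
      · rw [vB1]; ring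
    rw [Finset.sum_congr rfl fun i _ => hterm i, Finset.sum_ite, hFc,
      Finset.sum_pair hne, ← Finset.mul_sum]
    ring
  have d3 : deriv (fun h : ℂ => sigma 3 (A + h • B)) 0 =
      t ^ 2 * (∑ j ∈ Finset.univ.filter (fun j : Fin (m + 3) => (j : ℕ) < m + 1), B j j) := by
    rw [hder 3]
    simp only [e3]
    have hterm : ∀ i : Fin (m + 3), (-1 : ℂ) ^ 3 * (-(B i i) *
        ((if (i : ℕ) < m + 1 then (X : ℂ[X]) ^ m * (X - Polynomial.C t) ^ 2
          else (X : ℂ[X]) ^ (m + 1) * (X - Polynomial.C t)).coeff m))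
        = if (i : ℕ) < m + 1 then t * t * B i i else 0 := by
      intro i
      split
      · rw [vA0]; ring
      · rw [vB0]; ring
    rw [Finset.sum_congr rfl fun i _ => hterm i, ← Finset.sum_filter, ← Finset.mul_sum]
    ring
  have hall : (∑ j : Fin (m + 3), B j j)
      = (∑ j ∈ Finset.univ.filter (fun j : Fin (m + 3) => (j : ℕ) < m + 1), B j j)
        + (B ⟨m + 1, by omega⟩ ⟨m + 1, by omega⟩ + B ⟨m + 2, by omega⟩ ⟨m + 2, by omega⟩) := by
    rw [← Finset.sum_filter_add_sum_filter_not Finset.univ (fun j : Fin (m + 3) => (j : ℕ) < m + 1),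
      hFc, Finset.sum_pair hne]
  refine ⟨by simpa only [e2, e1] using d1, by simpa only [e2, e1] using d2,
    by simpa only [e2, e1] using d3, ?_⟩
  simp only [e2, e1] at *
  rw [d1, d2, d3, hall]
  ring
end

section
/- Let t ∈ ℂ, t ≠ 0, and A = diag(t,…,t,0) ∈ M_n(ℂ) (n−1 entries equal to t, one equal to 0). Then for B ∈ M_n(ℂ), the differential σ_{*,A}(B) = 0 (i.e. (d/dh)σ_j(A+hB)|_{h=0} = 0 for all 1 ≤ j ≤ n) if and only if tr B = 0 and b_{nn} = 0. -/
open Polynomial Matrix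

section helpers

lemma prod_linear_coeff {R : Type*} [CommRing R] {ι : Type*} [DecidableEq ι] (s : Finset ι)
    (a c : ι → R) :
    (∏ i ∈ s, (C (a i) + C (c i) * X)).coeff 0 = ∏ i ∈ s, a i ∧
    (∏ i ∈ s, (C (a i) + C (c i) * X)).coeff 1 = ∑ i ∈ s, c i * ∏ j ∈ s.erase i, a j := by
  classical
  induction s using Finset.induction with
  | empty => simp [Polynomial.coeff_one]
  | @insert x s hx ih =>
    obtain ⟨ih0, ih1⟩ := ih
    rw [Finset.prod_insert hx, Finset.prod_insert hx, Finset.sum_insert hx]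
    constructor
    · rw [Polynomial.mul_coeff_zero]
      simp [ih0]
    · have expand : (C (a x) + C (c x) * X) * (∏ i ∈ s, (C (a i) + C (c i) * X))
        = C (a x) * (∏ i ∈ s, (C (a i) + C (c i) * X))
          + C (c x) * (X * (∏ i ∈ s, (C (a i) + C (c i) * X))) := by ring
      rw [expand]
      rw [Polynomial.coeff_add, Polynomial.coeff_C_mul, Polynomial.coeff_C_mul,
        Polynomial.coeff_X_mul, ih0, ih1]
      rw [Finset.erase_insert hx]
      have h2 : ∑ i ∈ s, c i * ∏ j ∈ (insert x s).erase i, a j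
          = ∑ i ∈ s, c i * (a x * ∏ j ∈ s.erase i, a j) := by
        refine Finset.sum_congr rfl fun i hi => ?_
        have hix : i ≠ x := fun h => hx (h ▸ hi)
        rw [Finset.erase_insert_of_ne hix.symm,
          Finset.prod_insert (fun h => hx (Finset.mem_of_mem_erase h))]
      rw [h2]
      have h3 : a x * (∑ i ∈ s, c i * ∏ j ∈ s.erase i, a j)
          = ∑ i ∈ s, c i * (a x * ∏ j ∈ s.erase i, a j) := by
        rw [Finset.mul_sum]; exact Finset.sum_congr rfl fun i _ => by ring
      rw [h3, add_comm]

lemma coeff_eval_deriv (p : Polynomial (Polynomial ℂ)) (k : ℕ) (c : ℂ) :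
    deriv (fun h : ℂ => c * (p.eval (C h)).coeff k) 0 = c * (p.coeff 1).coeff k := by
  classical
  set q : Polynomial ℂ := ∑ m ∈ p.support, Polynomial.C ((p.coeff m).coeff k) * X ^ m with hq
  have key : ∀ h : ℂ, c * (p.eval (C h)).coeff k = (Polynomial.C c * q).eval h := by
    intro h
    rw [Polynomial.eval_eq_sum, Polynomial.sum_def]
    rw [Polynomial.finset_sum_coeff]
    simp only [hq, Polynomial.eval_mul, Polynomial.eval_C, Polynomial.eval_finset_sum,
      Polynomial.eval_mul, Polynomial.eval_C, Polynomial.eval_pow, Polynomial.eval_X]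
    congr 1
    refine Finset.sum_congr rfl fun m _ => ?_
    rw [← Polynomial.C_pow, Polynomial.coeff_mul_C]
  have := funext key
  rw [this]
  rw [Polynomial.deriv]
  rw [← Polynomial.coeff_zero_eq_eval_zero]
  rw [Polynomial.coeff_derivative]
  rw [Polynomial.coeff_C_mul]
  simp only [hq, Polynomial.finset_sum_coeff, Polynomial.coeff_C_mul, Polynomial.coeff_X_pow]
  push_cast
  simp only [zero_add, mul_one]
  congr 1
  by_cases h1 : 1 ∈ p.support
  · rw [Finset.sum_eq_single 1]
    · simp
    · intro b _ hb; simp [Ne.symm hb]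
    · intro h; exact absurd h1 h
  · rw [Finset.sum_eq_zero]
    · simp only [Polynomial.notMem_support_iff] at h1
      simp [h1]
    · intro b hb
      simp [show (1:ℕ) ≠ b from fun h => h1 (h ▸ hb)]

lemma coeff_one_eq_zero_of_sq_dvd {R : Type*} [CommRing R] {p : R[X]} (h : X^2 ∣ p) :
    p.coeff 1 = 0 := by
  obtain ⟨r, rfl⟩ := h
  rw [pow_two, mul_assoc]
  rw [show (1:ℕ) = 0 + 1 from rfl, Polynomial.coeff_X_mul]
  simp [Polynomial.mul_coeff_zero]

end helpers

theorem ker_diff_sigma_at_diag_tt0 (n : ℕ) (hn : 2 ≤ n) (t : ℂ) (ht : t ≠ 0)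
    (A : Matrix (Fin n) (Fin n) ℂ)
    (hA : A = Matrix.diagonal (fun j : Fin n => if (j : ℕ) = n - 1 then 0 else t))
    (B : Matrix (Fin n) (Fin n) ℂ) :
    (∀ j : ℕ, 1 ≤ j → j ≤ n → deriv (fun h : ℂ => sigma j (A + h • B)) 0 = 0) ↔
      Matrix.trace B = 0 ∧ B ⟨n - 1, by omega⟩ ⟨n - 1, by omega⟩ = 0 := by
  classical
  subst hA
  set lam : Fin n → ℂ := fun j : Fin n => if (j : ℕ) = n - 1 then 0 else t with hlam
  set D : Matrix (Fin n) (Fin n) ℂ := Matrix.diagonal lam with hD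
  set last : Fin n := ⟨n - 1, by omega⟩ with hlast
  set b : ℂ := B last last with hb
  set S : ℂ := Matrix.trace B with hS
  set M : Matrix (Fin n) (Fin n) (Polynomial (Polynomial ℂ)) :=
    Matrix.of (fun i j => C ((charmatrix D) i j) + C (C (- B i j)) * X) with hM
  -- Step A: evaluation
  have stepA : ∀ h : ℂ, charmatrix (D + h • B) = M.map (evalRingHom (C h)) := by
    intro h
    refine Matrix.ext fun i j => ?_
    by_cases hij : i = j
    · subst hij
      simp [hM, charmatrix_apply_eq, Matrix.add_apply, Matrix.smul_apply, C_add, C_mul]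
      ring
    · simp [hM, charmatrix_apply_ne _ _ _ hij, Matrix.add_apply, Matrix.smul_apply, C_mul]
      ring
  -- Step B
  have stepB : ∀ h : ℂ, (D + h • B).charpoly = (M.det).eval (C h) := by
    intro h
    rw [Matrix.charpoly, stepA h]
    rw [show M.map (evalRingHom (C h)) = (evalRingHom (C h)).mapMatrix M from rfl]
    rw [← RingHom.map_det]
    rfl
  -- Step C
  have stepC : ∀ j : ℕ, deriv (fun h : ℂ => sigma j (D + h • B)) 0
      = (-1 : ℂ)^j * ((M.det.coeff 1).coeff (n - j)) := by
    intro j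
    have hfun : (fun h : ℂ => sigma j (D + h • B))
        = fun h : ℂ => (-1:ℂ)^j * ((M.det.eval (C h)).coeff (n - j)) := by
      funext h
      rw [sigma, stepB h]
    rw [hfun, coeff_eval_deriv]
  -- Step D: coefficient of X in det M
  have stepD : M.det.coeff 1
      = ∑ i : Fin n, C (-B i i) * ∏ j ∈ Finset.univ.erase i, (charmatrix D) j j := by
    rw [Matrix.det_apply, Polynomial.finset_sum_coeff]
    rw [Finset.sum_eq_single (1 : Equiv.Perm (Fin n))]
    · simp only [Equiv.Perm.sign_one, one_smul, Equiv.Perm.one_apply]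
      have hid : ∀ i : Fin n, M i i = C ((charmatrix D) i i) + C (C (-B i i)) * X :=
        fun i => rfl
      calc (∏ i : Fin n, M i i).coeff 1
          = (∏ i : Fin n, (C ((charmatrix D) i i) + C (C (-B i i)) * X)).coeff 1 := by
            rw [Finset.prod_congr rfl fun i _ => hid i]
        _ = ∑ i : Fin n, C (-B i i) * ∏ j ∈ Finset.univ.erase i, (charmatrix D) j j :=
            (prod_linear_coeff Finset.univ (fun i => (charmatrix D) i i)
              (fun i => C (-B i i))).2
    · intro σ _ hσ
      rw [Polynomial.coeff_smul]
      have hex : ∃ i : Fin n, σ i ≠ i := by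
        by_contra hcon
        push_neg at hcon
        exact hσ (Equiv.ext fun i => hcon i)
      obtain ⟨i, hi⟩ := hex
      have hji : σ⁻¹ i ≠ i := by
        intro h
        have := congrArg σ h
        rw [Equiv.Perm.inv_def, Equiv.apply_symm_apply] at this
        exact hi this.symm
      have hXdvd : ∀ k : Fin n, σ k ≠ k → X ∣ M (σ k) k := by
        intro k hk
        have : (charmatrix D) (σ k) k = 0 := by
          rw [charmatrix_apply_ne _ _ _ hk]
          simp [hD, Matrix.diagonal_apply_ne _ hk]
        have hMk : M (σ k) k = C (C (-B (σ k) k)) * X := by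
          show C ((charmatrix D) (σ k) k) + C (C (-B (σ k) k)) * X = _
          rw [this]; simp
        rw [hMk]; exact dvd_mul_left X _
      have h1 : X ∣ M (σ i) i := hXdvd i hi
      have h2 : X ∣ M (σ (σ⁻¹ i)) (σ⁻¹ i) := by
        apply hXdvd
        rw [Equiv.Perm.inv_def, Equiv.apply_symm_apply]
        exact Ne.symm hji
      have hmem : (σ⁻¹ i) ∈ Finset.univ.erase i := by
        exact Finset.mem_erase.mpr ⟨hji, Finset.mem_univ _⟩
      have hprod : (∏ k : Fin n, M (σ k) k)
          = M (σ i) i * (M (σ (σ⁻¹ i)) (σ⁻¹ i) *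
              ∏ k ∈ (Finset.univ.erase i).erase (σ⁻¹ i), M (σ k) k) := by
        rw [← Finset.mul_prod_erase Finset.univ _ (Finset.mem_univ i),
          ← Finset.mul_prod_erase _ _ hmem]
      have hdvd2 : X^2 ∣ ∏ k : Fin n, M (σ k) k := by
        rw [hprod, pow_two]
        obtain ⟨r1, hr1⟩ := h1
        obtain ⟨r2, hr2⟩ := h2
        exact ⟨r1 * r2 * ∏ k ∈ (Finset.univ.erase i).erase (σ⁻¹ i), M (σ k) k,
          by rw [hr1, hr2]; ring⟩
      rw [coeff_one_eq_zero_of_sq_dvd hdvd2, smul_zero]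
    · intro h
      exact absurd (Finset.mem_univ _) h
  -- diagonal entries of charmatrix
  have hcdiag : ∀ j : Fin n, (charmatrix D) j j = if j = last then X else X - C t := by
    intro j
    rw [charmatrix_apply_eq]
    by_cases hj : j = last
    · subst hj
      have : lam last = 0 := by simp [hlam, hlast]
      simp [hD, Matrix.diagonal_apply_eq, this]
    · have hjn : (j : ℕ) ≠ n - 1 := fun h => hj (Fin.ext (by simp [hlast, h]))
      have : lam j = t := by simp [hlam, hjn]
      simp [hD, Matrix.diagonal_apply_eq, this, hj]
  -- Step F: the two products
  have prodLast : ∏ j ∈ Finset.univ.erase last, (charmatrix D) j j = (X - C t)^(n-1) := by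
    rw [Finset.prod_congr rfl (fun j hj => by
      rw [hcdiag j, if_neg (Finset.ne_of_mem_erase hj)])]
    rw [Finset.prod_const, Finset.card_erase_of_mem (Finset.mem_univ _), Finset.card_univ,
      Fintype.card_fin]
  have prodF : ∀ i : Fin n, i ≠ last →
      ∏ j ∈ Finset.univ.erase i, (charmatrix D) j j = (X - C t)^(n-2) * X := by
    intro i hi
    have hmem : last ∈ Finset.univ.erase i := Finset.mem_erase.mpr ⟨Ne.symm hi, Finset.mem_univ _⟩
    rw [← Finset.mul_prod_erase _ _ hmem, hcdiag last, if_pos rfl]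
    rw [Finset.prod_congr rfl (fun j hj => by
      rw [hcdiag j, if_neg (Finset.ne_of_mem_erase hj)])]
    rw [Finset.prod_const, Finset.card_erase_of_mem hmem,
      Finset.card_erase_of_mem (Finset.mem_univ _), Finset.card_univ, Fintype.card_fin]
    rw [show n - 1 - 1 = n - 2 by omega, mul_comm]
  -- Step G
  have hsum_erase : ∑ i ∈ Finset.univ.erase last, B i i = S - b := by
    have := Finset.add_sum_erase Finset.univ (fun i => B i i) (Finset.mem_univ last)
    have htr : S = ∑ i : Fin n, B i i := rfl
    rw [htr]
    rw [← this]
    ring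
  have stepG : M.det.coeff 1 = -((X - C t)^(n-2) * (C S * X - C (b * t))) := by
    rw [stepD, ← Finset.add_sum_erase Finset.univ _ (Finset.mem_univ last), prodLast]
    rw [Finset.sum_congr rfl (fun i hi => by
      rw [prodF i (Finset.ne_of_mem_erase hi)])]
    rw [← Finset.sum_mul]
    have hsumC : ∑ i ∈ Finset.univ.erase last, (C (-B i i) : ℂ[X]) = C (-(S - b)) := by
      rw [← map_sum C (fun i => -B i i) (Finset.univ.erase last)]
      congr 1
      rw [Finset.sum_neg_distrib, hsum_erase]
    rw [hsumC]
    rw [show n - 1 = (n - 2) + 1 by omega, pow_succ]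
    rw [map_neg, map_neg, map_sub, C_mul]
    ring
  -- finale
  set Q : ℂ[X] := (X - C t)^(n-2) * (C S * X - C (b * t)) with hQdef
  have hdQ : Q.natDegree ≤ n - 1 := by
    refine le_trans (natDegree_mul_le) ?_
    have h1 : ((X - C t : ℂ[X])^(n-2)).natDegree ≤ n - 2 := by
      rw [natDegree_pow, natDegree_X_sub_C, mul_one]
    have h2 : (C S * X - C (b*t) : ℂ[X]).natDegree ≤ 1 := by
      refine le_trans (natDegree_sub_le _ _) ?_
      have ha : (C S * X : ℂ[X]).natDegree ≤ 1 :=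
        le_trans (natDegree_C_mul_le _ _) (le_of_eq natDegree_X)
      have hc : (C (b*t) : ℂ[X]).natDegree ≤ 1 := by rw [natDegree_C]; omega
      exact max_le ha hc
    omega
  constructor
  · intro H
    have hQ : Q = 0 := by
      refine Polynomial.ext fun k => ?_
      rw [Polynomial.coeff_zero]
      by_cases hk : k < n
      · have hj := H (n - k) (by omega) (by omega)
        rw [stepC, stepG] at hj
        rw [show n - (n - k) = k by omega] at hj
        rw [Polynomial.coeff_neg] at hj
        have hne : ((-1 : ℂ)) ^ (n - k) ≠ 0 := pow_ne_zero _ (by norm_num)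
        rcases mul_eq_zero.mp hj with h | h
        · exact absurd h hne
        · exact neg_eq_zero.mp h
      · exact Polynomial.coeff_eq_zero_of_natDegree_lt (by omega)
    have h2 : (C S * X - C (b * t) : ℂ[X]) = 0 := by
      rcases mul_eq_zero.mp hQ with h | h
      · exact absurd h (pow_ne_zero _ (Polynomial.X_sub_C_ne_zero t))
      · exact h
    have hS0 : S = 0 := by
      have := congrArg (fun p : ℂ[X] => p.coeff 1) h2
      simpa [Polynomial.coeff_sub, Polynomial.coeff_C_mul, Polynomial.coeff_C] using this
    have hb0 : b = 0 := by
      have h0 := congrArg (fun p : ℂ[X] => p.coeff 0) h2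
      simp only [Polynomial.coeff_sub, Polynomial.coeff_C_mul, Polynomial.coeff_X_zero,
        Polynomial.coeff_C, if_pos rfl, Polynomial.coeff_zero, mul_zero, zero_sub,
        neg_eq_zero] at h0
      exact (mul_eq_zero.mp h0).resolve_right ht
    exact ⟨hS0, hb0⟩
  · rintro ⟨hS0, hb0⟩ j hj1 hj2
    rw [stepC, stepG]
    have hQ0 : Q = 0 := by
      rw [hQdef, hb0, hS0]
      simp
    rw [hQ0]
    simp
end

section
/- For B ∈ M_n(ℂ) the following are equivalent: (a) B is nilpotent; (b) there is an entire map φ : ℂ → Ω_n with φ(0) = 0 and φ′(0) = B. Moreover in case (a) the map φ(ζ) = ζB works, since ζB has spectral radius 0 for every ζ. -/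
open Matrix Polynomial Filter Bornology Set

/-- The determinant of a matrix with entrywise differentiable entries is differentiable. -/
lemma aux_det_differentiable {N : ℕ} {A : ℂ → Matrix (Fin N) (Fin N) ℂ}
    (h : ∀ i j, Differentiable ℂ fun ζ => A ζ i j) :
    Differentiable ℂ fun ζ => (A ζ).det := by
  simp only [Matrix.det_apply']
  apply Differentiable.fun_sum
  intro σ _
  exact (Differentiable.fun_finset_prod (fun i _ => h (σ i) i)).const_mul _

/-- Roots of the characteristic polynomial lie in the spectrum. -/
lemma aux_root_mem_spectrum {N : ℕ} {M : Matrix (Fin N) (Fin N) ℂ} {μ : ℂ}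
    (h : M.charpoly.IsRoot μ) : μ ∈ spectrum ℂ M := by
  rw [spectrum.mem_iff]
  intro hu
  have key : M.charmatrix.map (eval μ) = algebraMap ℂ (Matrix (Fin N) (Fin N) ℂ) μ - M := by
    ext i j
    rcases eq_or_ne i j with rfl | hij
    · simp [Matrix.charmatrix_apply_eq, Algebra.algebraMap_eq_smul_one,
        Matrix.smul_apply, Matrix.one_apply, Matrix.sub_apply]
    · simp [Matrix.charmatrix_apply_ne _ _ _ hij, Algebra.algebraMap_eq_smul_one,
        Matrix.smul_apply, Matrix.one_apply_ne hij, Matrix.sub_apply]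
  have hdet : (algebraMap ℂ (Matrix (Fin N) (Fin N) ℂ) μ - M).det = 0 := by
    rw [← key]
    have h' : eval μ M.charpoly = 0 := h
    rw [Matrix.charpoly] at h'
    have hrw : M.charmatrix.map (eval μ) = (evalRingHom μ).mapMatrix M.charmatrix := rfl
    rw [hrw, ← RingHom.map_det]
    exact h'
  rw [Matrix.isUnit_iff_isUnit_det, hdet] at hu
  exact hu.ne_zero rfl

/-- Spectrum of a nilpotent element is contained in `{0}`. -/
lemma aux_spectrum_nilpotent {R : Type*} [Ring R] [Algebra ℂ R] {a : R}
    (ha : IsNilpotent a) {μ : ℂ} (hμ : μ ∈ spectrum ℂ a) : μ = 0 := by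
  by_contra h
  apply spectrum.mem_iff.mp hμ
  have hu : IsUnit (algebraMap ℂ R μ) := (isUnit_iff_ne_zero.mpr h).map (algebraMap ℂ R)
  have hc : Commute (-a) (algebraMap ℂ R μ) := (Algebra.commute_algebraMap_left μ (-a)).symm
  have := ha.neg.isUnit_add_left_of_commute hu hc
  simpa [sub_eq_add_neg] using this

lemma aux_norm_multiset_prod_le {m : Multiset ℂ} (h : ∀ x ∈ m, ‖x‖ ≤ 2) :
    ‖m.prod‖ ≤ 2 ^ Multiset.card m := by
  induction m using Multiset.induction_on with
  | empty => simp
  | cons a s ih =>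
    rw [Multiset.prod_cons, Multiset.card_cons, norm_mul, pow_succ']
    exact mul_le_mul (h a (Multiset.mem_cons_self a s))
      (ih fun x hx => h x (Multiset.mem_cons_of_mem hx)) (norm_nonneg _) (by norm_num)

theorem nilpotent_iff_entire_curve_at_zero (n : ℕ) (B : Matrix (Fin n) (Fin n) ℂ) :
    (IsNilpotent B ↔
      ∃ φ : ℂ → Matrix (Fin n) (Fin n) ℂ,
        (∀ i j : Fin n, Differentiable ℂ fun ζ => φ ζ i j) ∧
        (∀ ζ : ℂ, ∀ μ ∈ spectrum ℂ (φ ζ), ‖μ‖ < 1) ∧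
        φ 0 = 0 ∧
        (∀ i j : Fin n, deriv (fun ζ => φ ζ i j) 0 = B i j)) ∧
    (IsNilpotent B → ∀ ζ : ℂ, ∀ μ ∈ spectrum ℂ (ζ • B), μ = 0) := by
  have hsecond : IsNilpotent B → ∀ ζ : ℂ, ∀ μ ∈ spectrum ℂ (ζ • B), μ = 0 := by
    rintro ⟨k, hk⟩ ζ μ hμ
    exact aux_spectrum_nilpotent ⟨k, by rw [_root_.smul_pow, hk, smul_zero]⟩ hμ
  refine ⟨⟨fun hB => ?_, fun hφ => ?_⟩, hsecond⟩
  · -- (a) → (b) : take φ ζ = ζ • B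
    refine ⟨fun ζ => ζ • B, ?_, ?_, by simp, ?_⟩
    · intro i j
      have : (fun ζ : ℂ => (ζ • B) i j) = fun ζ : ℂ => ζ * B i j := by
        funext ζ; simp [Matrix.smul_apply]
      rw [this]
      exact differentiable_id.mul (differentiable_const _)
    · intro ζ μ hμ
      rw [hsecond hB ζ μ hμ]
      simpa using one_pos
    · intro i j
      have : (fun ζ : ℂ => (ζ • B) i j) = fun ζ : ℂ => ζ * B i j := by
        funext ζ; simp [Matrix.smul_apply]
      rw [this]
      simpa using ((hasDerivAt_id (0 : ℂ)).mul_const (B i j)).deriv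
  · -- (b) → (a)
    obtain ⟨φ, hdiff, hspec, h0, hderiv⟩ := hφ
    -- Step A: Liouville. For ‖t‖ ≤ 1, the entire function ζ ↦ det (1 - t • φ ζ) is bounded,
    -- hence constant, equal to its value 1 at ζ = 0.
    have stepA : ∀ t : ℂ, ‖t‖ ≤ 1 → ∀ ζ : ℂ, (1 - t • φ ζ).det = 1 := by
      intro t ht ζ
      have hF : Differentiable ℂ fun u => ((1 : Matrix (Fin n) (Fin n) ℂ) - t • φ u).det := by
        apply aux_det_differentiable
        intro i j
        have : (fun u : ℂ => ((1 : Matrix (Fin n) (Fin n) ℂ) - t • φ u) i j)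
            = fun u : ℂ => (1 : Matrix (Fin n) (Fin n) ℂ) i j - t * φ u i j := by
          funext u; simp [Matrix.sub_apply, Matrix.smul_apply]
        rw [this]
        exact (differentiable_const _).sub ((hdiff i j).const_mul t)
      -- boundedness
      have hbound : ∀ u : ℂ, ‖((1 : Matrix (Fin n) (Fin n) ℂ) - t • φ u).det‖ ≤ 2 ^ n := by
        intro u
        set M : Matrix (Fin n) (Fin n) ℂ := 1 - t • φ u with hM
        have hroots : ∀ x ∈ M.charpoly.roots, ‖x‖ ≤ 2 := by
          intro x hx
          have hxs : x ∈ spectrum ℂ M :=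
            aux_root_mem_spectrum (isRoot_of_mem_roots hx)
          -- x = 1 - y with y ∈ spectrum (t • φ u)
          have hone : M = algebraMap ℂ (Matrix (Fin n) (Fin n) ℂ) 1 - t • φ u := by
            rw [_root_.map_one]
          rw [hone, ← spectrum.singleton_sub_eq] at hxs
          obtain ⟨a, ha, y, hy, rfl⟩ := hxs
          rw [Set.mem_singleton_iff] at ha
          subst ha
          have hynorm : ‖y‖ ≤ 1 := by
            rcases eq_or_ne t 0 with rfl | htne
            · have : y = 0 := aux_spectrum_nilpotent (IsNilpotent.zero (R := Matrix (Fin n) (Fin n) ℂ)) (by simpa using hy)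
              simp [this]
            · rw [show t • φ u = (Units.mk0 t htne) • φ u from rfl,
                spectrum.unit_smul_eq_smul] at hy
              obtain ⟨μ, hμ, rfl⟩ := hy
              have := hspec u μ hμ
              calc ‖(Units.mk0 t htne) • μ‖ = ‖t‖ * ‖μ‖ := by
                    simp [Units.smul_def, norm_mul]
                _ ≤ 1 * 1 := by
                    exact mul_le_mul ht this.le (norm_nonneg _) (by linarith [norm_nonneg t])
                _ = 1 := one_mul 1
          calc ‖(1 : ℂ) - y‖ ≤ ‖(1 : ℂ)‖ + ‖y‖ := norm_sub_le _ _
            _ ≤ 1 + 1 := by rw [norm_one]; exact add_le_add_right hynorm 1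
            _ = 2 := by norm_num
        rw [Matrix.det_eq_prod_roots_charpoly]
        calc ‖M.charpoly.roots.prod‖ ≤ 2 ^ Multiset.card M.charpoly.roots :=
              aux_norm_multiset_prod_le hroots
          _ ≤ 2 ^ n := by
              apply pow_le_pow_right₀ (by norm_num)
              calc Multiset.card M.charpoly.roots ≤ M.charpoly.natDegree :=
                    Polynomial.card_roots' _
                _ = n := by rw [Matrix.charpoly_natDegree_eq_dim, Fintype.card_fin]
      have hb : IsBounded (Set.range fun u => ((1 : Matrix (Fin n) (Fin n) ℂ) - t • φ u).det) := by
        rw [isBounded_iff_forall_norm_le]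
        exact ⟨2 ^ n, by rintro x ⟨u, rfl⟩; exact hbound u⟩
      have := hF.apply_eq_apply_of_bounded hb ζ 0
      rw [this, h0, smul_zero, sub_zero, det_one]
    -- Step B: identity theorem in t: det (1 - t • φ ζ) = 1 for ALL t
    have stepB : ∀ ζ t : ℂ, ((1 : Matrix (Fin n) (Fin n) ℂ) - t • φ ζ).det = 1 := by
      intro ζ t
      have hG : Differentiable ℂ fun s : ℂ => ((1 : Matrix (Fin n) (Fin n) ℂ) - s • φ ζ).det := by
        apply aux_det_differentiable
        intro i j
        have : (fun s : ℂ => ((1 : Matrix (Fin n) (Fin n) ℂ) - s • φ ζ) i j)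
            = fun s : ℂ => (1 : Matrix (Fin n) (Fin n) ℂ) i j - s * φ ζ i j := by
          funext s; simp [Matrix.sub_apply, Matrix.smul_apply]
        rw [this]
        exact (differentiable_const _).sub (differentiable_id.mul (differentiable_const _))
      have h1 : AnalyticOnNhd ℂ (fun s : ℂ => ((1 : Matrix (Fin n) (Fin n) ℂ) - s • φ ζ).det)
          Set.univ := Complex.analyticOnNhd_univ_iff_differentiable.mpr hG
      have h2 : AnalyticOnNhd ℂ (fun _ : ℂ => (1 : ℂ)) Set.univ :=
        Complex.analyticOnNhd_univ_iff_differentiable.mpr (differentiable_const _)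
      have heq : (fun s : ℂ => ((1 : Matrix (Fin n) (Fin n) ℂ) - s • φ ζ).det)
          =ᶠ[nhds (0 : ℂ)] fun _ => (1 : ℂ) := by
        filter_upwards [Metric.ball_mem_nhds (0 : ℂ) one_pos] with s hs
        exact stepA s (le_of_lt (by simpa using hs)) ζ
      exact h1.eqOn_of_preconnected_of_eventuallyEq h2 isPreconnected_univ
        (Set.mem_univ (0 : ℂ)) heq (Set.mem_univ t)
    -- Step C: spectrum of each φ ζ is {0}
    have stepC : ∀ ζ : ℂ, ∀ μ ∈ spectrum ℂ (φ ζ), μ = 0 := by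
      intro ζ μ hμ
      by_contra hne
      apply spectrum.mem_iff.mp hμ
      have key : algebraMap ℂ (Matrix (Fin n) (Fin n) ℂ) μ - φ ζ
          = μ • ((1 : Matrix (Fin n) (Fin n) ℂ) - μ⁻¹ • φ ζ) := by
        rw [smul_sub, smul_smul, mul_inv_cancel₀ hne, one_smul,
          Algebra.algebraMap_eq_smul_one]
      rw [key, Matrix.isUnit_iff_isUnit_det, det_smul, stepB ζ μ⁻¹, mul_one]
      exact (isUnit_iff_ne_zero.mpr (pow_ne_zero _ hne))
    -- Step D: charpoly (φ ζ) = X ^ n, hence (φ ζ) ^ n = 0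
    have stepD : ∀ ζ : ℂ, (φ ζ) ^ n = 0 := by
      intro ζ
      set p := (φ ζ).charpoly with hp
      have hm : p.Monic := Matrix.charpoly_monic _
      have hs : p.Splits := IsAlgClosed.splits p
      have hr : ∀ x ∈ p.roots, x = 0 := fun x hx =>
        stepC ζ x (aux_root_mem_spectrum (isRoot_of_mem_roots hx))
      have hcard : Multiset.card p.roots = n := by
        rw [Polynomial.splits_iff_card_roots.mp hs, hp,
          Matrix.charpoly_natDegree_eq_dim, Fintype.card_fin]
      have hXn : p = X ^ n := by
        have hprod := hs.eq_prod_roots_of_monic hm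
        have hrepl : p.roots = Multiset.replicate n 0 := Multiset.eq_replicate.mpr ⟨hcard, hr⟩
        rw [hprod, hrepl, Multiset.map_replicate, Multiset.prod_replicate, map_zero, sub_zero]
      have := Matrix.aeval_self_charpoly (φ ζ)
      rw [← hp, hXn, map_pow, aeval_X] at this
      exact this
    -- Step E: limit argument, B ^ n = 0
    have hslope : ∀ i j, Tendsto (fun ζ : ℂ => ζ⁻¹ * φ ζ i j) (nhdsWithin 0 {(0:ℂ)}ᶜ)
        (nhds (B i j)) := by
      intro i j
      have hd : HasDerivAt (fun ζ => φ ζ i j) (B i j) 0 := by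
        have := ((hdiff i j) 0).hasDerivAt
        rwa [hderiv i j] at this
      have ht := hasDerivAt_iff_tendsto_slope.mp hd
      refine ht.congr fun ζ => ?_
      have h00 : φ 0 i j = 0 := by rw [h0]; rfl
      rw [slope_def_field, h00, sub_zero, sub_zero, div_eq_inv_mul]
    have hmat : Tendsto (fun ζ : ℂ => ζ⁻¹ • φ ζ) (nhdsWithin 0 {(0:ℂ)}ᶜ) (nhds B) := by
      apply tendsto_pi_nhds.mpr
      intro i
      rw [tendsto_pi_nhds]
      intro j
      have := hslope i j
      refine this.congr fun ζ => ?_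
      simp [Matrix.smul_apply]
    have hpow : Tendsto (fun ζ : ℂ => (ζ⁻¹ • φ ζ) ^ n) (nhdsWithin 0 {(0:ℂ)}ᶜ)
        (nhds (B ^ n)) := ((continuous_pow n).tendsto B).comp hmat
    have hzero : Tendsto (fun _ : ℂ => (0 : Matrix (Fin n) (Fin n) ℂ))
        (nhdsWithin 0 {(0:ℂ)}ᶜ) (nhds (B ^ n)) := by
      refine hpow.congr fun ζ => ?_
      rw [_root_.smul_pow, stepD ζ, smul_zero]
    exact ⟨n, tendsto_nhds_unique hzero tendsto_const_nhds⟩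
end

section
/- Let t ∈ ℂ∩𝔻∖{0} and A_t = diag(0,0,t) ∈ Ω_3. For every B ∈ M_3(ℂ) satisfying b_{33} = 0, b_{11} + b_{22} = 0 and b_{11}² + b_{12}b_{21} = 0, there exists an entire map φ : ℂ → Ω_3 with φ(0) = A_t and φ′(0) = B. (Take φ(ζ) = e^{ζY}(A_t + ζX)e^{−ζY} with the decomposition B = X + [Y,A_t].) -/
open Matrix

lemma entry_diff' {n : ℕ} {A B : ℂ → Matrix (Fin n) (Fin n) ℂ}
    (hA : ∀ i j, Differentiable ℂ fun ζ => A ζ i j)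
    (hB : ∀ i j, Differentiable ℂ fun ζ => B ζ i j) :
    ∀ i j, Differentiable ℂ fun ζ => (A ζ * B ζ) i j := by
  intro i j
  simp only [Matrix.mul_apply]
  exact Differentiable.fun_sum fun k _ => (hA i k).mul (hB k j)

lemma entry_hasDerivAt' {n : ℕ} {A B : ℂ → Matrix (Fin n) (Fin n) ℂ}
    {A' B' : Matrix (Fin n) (Fin n) ℂ} {x : ℂ}
    (hA : ∀ i j, HasDerivAt (fun ζ => A ζ i j) (A' i j) x)
    (hB : ∀ i j, HasDerivAt (fun ζ => B ζ i j) (B' i j) x) :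
    ∀ i j, HasDerivAt (fun ζ => (A ζ * B ζ) i j)
      ((A' * B x + A x * B') i j) x := by
  intro i j
  simp only [Matrix.mul_apply, Matrix.add_apply]
  rw [← Finset.sum_add_distrib]
  exact HasDerivAt.fun_sum fun k _ => by
    simpa [mul_comm] using (hA i k).fun_mul (hB k j)

lemma affine_entry_diff {n : ℕ} (C D : Matrix (Fin n) (Fin n) ℂ) :
    ∀ i j, Differentiable ℂ fun ζ : ℂ => (C + ζ • D) i j := by
  intro i j
  simp only [Matrix.add_apply, Matrix.smul_apply, smul_eq_mul]
  exact (differentiable_id.mul (differentiable_const _)).const_add _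

lemma affine_entry_deriv {n : ℕ} (C D : Matrix (Fin n) (Fin n) ℂ) (x : ℂ) :
    ∀ i j, HasDerivAt (fun ζ : ℂ => (C + ζ • D) i j) (D i j) x := by
  intro i j
  simp only [Matrix.add_apply, Matrix.smul_apply, smul_eq_mul]
  simpa using ((hasDerivAt_id x).mul_const (D i j)).const_add (C i j)

lemma one_add_mul_one_sub {A : Type*} [Ring A] (a : A) (h : a * a = 0) :
    (1 + a) * (1 - a) = 1 := by
  have e : (1 + a) * (1 - a) = 1 - a * a := by noncomm_ring
  rw [e, h, sub_zero]

lemma one_sub_mul_one_add {A : Type*} [Ring A] (a : A) (h : a * a = 0) :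
    (1 - a) * (1 + a) = 1 := by
  have e : (1 - a) * (1 + a) = 1 - a * a := by noncomm_ring
  rw [e, h, sub_zero]

lemma mul4_one {A : Type*} [Ring A] (a b c d : A) (h1 : b * c = 1) (h2 : a * d = 1) :
    a * b * (c * d) = 1 := by
  rw [mul_assoc, ← mul_assoc b c d, h1, one_mul, h2]

set_option maxHeartbeats 1000000 in
theorem entire_curve_through_diag00t (t : ℂ) (ht0 : t ≠ 0) (ht : ‖t‖ < 1)
    (At : Matrix (Fin 3) (Fin 3) ℂ) (hAt : At = Matrix.diagonal ![0, 0, t])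
    (B : Matrix (Fin 3) (Fin 3) ℂ)
    (hB33 : B 2 2 = 0) (hBtr : B 0 0 + B 1 1 = 0)
    (hBdet : B 0 0 ^ 2 + B 0 1 * B 1 0 = 0) :
    ∃ φ : ℂ → Matrix (Fin 3) (Fin 3) ℂ,
      (∀ i j : Fin 3, Differentiable ℂ fun ζ => φ ζ i j) ∧
      (∀ ζ : ℂ, ∀ μ ∈ spectrum ℂ (φ ζ), ‖μ‖ < 1) ∧
      φ 0 = At ∧
      (∀ i j : Fin 3, deriv (fun ζ => φ ζ i j) 0 = B i j) := by
  have hAt' : At = !![0, 0, 0; 0, 0, 0; 0, 0, t] := by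
    rw [hAt]; ext i j; fin_cases i <;> fin_cases j <;>
      simp [Matrix.diagonal_apply, Matrix.vecHead, Matrix.vecTail]
  set X : Matrix (Fin 3) (Fin 3) ℂ :=
    !![B 0 0, B 0 1, 0; B 1 0, B 1 1, 0; 0, 0, 0] with hX
  set Y₁ : Matrix (Fin 3) (Fin 3) ℂ :=
    !![0, 0, B 0 2 / t; 0, 0, B 1 2 / t; 0, 0, 0] with hY₁
  set Y₂ : Matrix (Fin 3) (Fin 3) ℂ :=
    !![0, 0, 0; 0, 0, 0; -(B 2 0) / t, -(B 2 1) / t, 0] with hY₂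
  have hY₁sq : ∀ ζ : ℂ, (ζ • Y₁) * (ζ • Y₁) = 0 := by
    intro ζ
    rw [Matrix.smul_mul, Matrix.mul_smul]
    have : Y₁ * Y₁ = 0 := by
      rw [hY₁]; ext i j; fin_cases i <;> fin_cases j <;>
        simp [Matrix.mul_apply, Fin.sum_univ_three]
    rw [this]; simp
  have hY₂sq : ∀ ζ : ℂ, (ζ • Y₂) * (ζ • Y₂) = 0 := by
    intro ζ
    rw [Matrix.smul_mul, Matrix.mul_smul]
    have : Y₂ * Y₂ = 0 := by
      rw [hY₂]; ext i j; fin_cases i <;> fin_cases j <;>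
        simp [Matrix.mul_apply, Fin.sum_univ_three]
    rw [this]; simp
  set M : ℂ → Matrix (Fin 3) (Fin 3) ℂ := fun ζ => At + ζ • X with hM
  set U : ℂ → Matrix (Fin 3) (Fin 3) ℂ :=
    fun ζ => (1 + ζ • Y₁) * (1 + ζ • Y₂) with hU
  set V : ℂ → Matrix (Fin 3) (Fin 3) ℂ :=
    fun ζ => (1 - ζ • Y₂) * (1 - ζ • Y₁) with hV
  have huv : ∀ ζ, U ζ * V ζ = 1 := fun ζ =>
    mul4_one _ _ _ _ (one_add_mul_one_sub _ (hY₂sq ζ)) (one_add_mul_one_sub _ (hY₁sq ζ))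
  have hvu : ∀ ζ, V ζ * U ζ = 1 := fun ζ =>
    mul4_one _ _ _ _ (one_sub_mul_one_add _ (hY₁sq ζ)) (one_sub_mul_one_add _ (hY₂sq ζ))
  have hVform : ∀ ζ : ℂ, V ζ = (1 + ζ • (-Y₂)) * (1 + ζ • (-Y₁)) := by
    intro ζ; rw [hV]; simp [sub_eq_add_neg, smul_neg]
  refine ⟨fun ζ => U ζ * M ζ * V ζ, ?_, ?_, ?_, ?_⟩
  · -- differentiability
    intro i j
    have h1 := affine_entry_diff (1 : Matrix (Fin 3) (Fin 3) ℂ) Y₁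
    have h2 := affine_entry_diff (1 : Matrix (Fin 3) (Fin 3) ℂ) Y₂
    have h3 := affine_entry_diff (1 : Matrix (Fin 3) (Fin 3) ℂ) (-Y₂)
    have h4 := affine_entry_diff (1 : Matrix (Fin 3) (Fin 3) ℂ) (-Y₁)
    have hm := affine_entry_diff At X
    have := entry_diff' (entry_diff' (entry_diff' h1 h2) hm) (entry_diff' h3 h4) i j
    simp only [hU, hM]
    simpa [hVform] using this
  · -- spectrum
    intro ζ μ hμ
    have hspec : spectrum ℂ (U ζ * M ζ * V ζ) = spectrum ℂ (M ζ) :=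
      spectrum.units_conjugate (R := ℂ) (a := M ζ) (u := ⟨U ζ, V ζ, huv ζ, hvu ζ⟩)
    rw [hspec, spectrum.mem_iff] at hμ
    have hdet : (algebraMap ℂ (Matrix (Fin 3) (Fin 3) ℂ) μ - M ζ).det = 0 := by
      by_contra hd
      exact hμ ((Matrix.isUnit_iff_isUnit_det _).2 (isUnit_iff_ne_zero.2 hd))
    have hMent : algebraMap ℂ (Matrix (Fin 3) (Fin 3) ℂ) μ - M ζ =
        !![μ - ζ * B 0 0, -(ζ * B 0 1), 0;
           -(ζ * B 1 0), μ - ζ * B 1 1, 0;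
           0, 0, μ - t] := by
      rw [hM, hAt', hX]
      ext i j
      fin_cases i <;> fin_cases j <;>
        simp [Matrix.algebraMap_matrix_apply]
    rw [hMent, Matrix.det_fin_three] at hdet
    simp at hdet
    have key : μ ^ 2 * (μ - t) = 0 := by
      linear_combination hdet + (μ - t) * ζ * μ * hBtr + (μ - t) * ζ ^ 2 * hBdet -
        (μ - t) * ζ ^ 2 * B 0 0 * hBtr
    rcases mul_eq_zero.1 key with h | h
    · have h0 : μ = 0 := by
        exact pow_eq_zero_iff (n := 2) (by norm_num) |>.1 h
      simp [h0]
    · have h0 : μ = t := by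
        have := sub_eq_zero.1 h; exact this
      rwa [h0]
  · -- value at 0
    simp [hU, hV, hM]
  · -- derivative at 0
    intro i j
    have h1 := affine_entry_deriv (1 : Matrix (Fin 3) (Fin 3) ℂ) Y₁ 0
    have h2 := affine_entry_deriv (1 : Matrix (Fin 3) (Fin 3) ℂ) Y₂ 0
    have h3 := affine_entry_deriv (1 : Matrix (Fin 3) (Fin 3) ℂ) (-Y₂) 0
    have h4 := affine_entry_deriv (1 : Matrix (Fin 3) (Fin 3) ℂ) (-Y₁) 0
    have hm := affine_entry_deriv At X 0
    have hφ' := entry_hasDerivAt' (entry_hasDerivAt' (entry_hasDerivAt' h1 h2) hm)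
      (entry_hasDerivAt' h3 h4)
    simp only [zero_smul, add_zero, mul_one, one_mul] at hφ'
    have hfun : (fun ζ : ℂ => (U ζ * M ζ * V ζ) i j) =
        fun ζ : ℂ => ((1 + ζ • Y₁) * (1 + ζ • Y₂) * (At + ζ • X) *
          ((1 + ζ • (-Y₂)) * (1 + ζ • (-Y₁)))) i j := by
      funext ζ; rw [hU, hM, hVform]
    have hmat : (Y₁ + Y₂) * At + X + At * (-Y₂ + -Y₁) = B := by
      rw [hX, hY₁, hY₂, hAt']
      ext i j
      fin_cases i <;> fin_cases j <;>
        simp [Matrix.mul_apply, Fin.sum_univ_three, Matrix.vecHead, Matrix.vecTail,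
          hB33, div_mul_cancel₀, ht0] <;>
        field_simp
    rw [hfun, (hφ' i j).deriv, hmat]
end

section
/- Let Ã ∈ M_3(ℂ) have ã_{23} = 1 and all other entries 0, and let X̃ = diag(1,−1,0). There is no entire holomorphic map φ : ℂ → Ω_3 with φ(0) = Ã and φ′(0) = X̃. More precisely, the Kobayashi–Royden pseudometric satisfies k_{Ω_3}(Ã; X̃) ≥ min_{s∈ℂ} max{ (|s−1|/3)^{1/2}, |s|^{1/3} } > 0. -/
open Polynomial Matrix Multiset Metric

noncomputable def q3 (M : Matrix (Fin 3) (Fin 3) ℂ) : ℂ :=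
  M 0 0 * M 1 1 - M 0 1 * M 1 0 + (M 0 0 * M 2 2 - M 0 2 * M 2 0)
    + (M 1 1 * M 2 2 - M 1 2 * M 2 1)

lemma charpoly_fin3 (M : Matrix (Fin 3) (Fin 3) ℂ) :
    M.charpoly = X ^ 3 - C M.trace * X ^ 2 + C (q3 M) * X - C M.det := by
  rw [Matrix.charpoly, Matrix.det_fin_three]
  simp only [charmatrix_apply, Matrix.diagonal_apply, Fin.ext_iff, Matrix.trace_fin_three,
    Matrix.det_fin_three, q3, map_add, _root_.map_mul, map_sub, map_neg]
  norm_num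
  ring

lemma coeff_one_charpoly (M : Matrix (Fin 3) (Fin 3) ℂ) : M.charpoly.coeff 1 = q3 M := by
  rw [charpoly_fin3]
  simp [coeff_one, coeff_X_pow]

lemma eval_charpoly' (M : Matrix (Fin 3) (Fin 3) ℂ) (μ : ℂ) :
    M.charpoly.eval μ = (Matrix.scalar (Fin 3) μ - M).det := by
  rw [Matrix.charpoly, ← Polynomial.coe_evalRingHom, RingHom.map_det]
  congr 1
  ext i j
  by_cases h : i = j <;>
    simp [Matrix.map_apply, charmatrix_apply, Matrix.diagonal_apply, Matrix.sub_apply,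
      Matrix.scalar_apply, h, Matrix.one_apply]

lemma root_mem_spectrum (M : Matrix (Fin 3) (Fin 3) ℂ) (μ : ℂ)
    (h : M.charpoly.IsRoot μ) : μ ∈ spectrum ℂ M := by
  rw [spectrum.mem_iff]
  intro hu
  rw [Matrix.isUnit_iff_isUnit_det] at hu
  have : (algebraMap ℂ (Matrix (Fin 3) (Fin 3) ℂ) μ - M) = Matrix.scalar (Fin 3) μ - M := rfl
  rw [this, ← eval_charpoly'] at hu
  rw [Polynomial.IsRoot.def] at h
  rw [h] at hu
  exact hu.ne_zero rfl

lemma prod_norm_le_one {R : Multiset ℂ} (h : ∀ r ∈ R, ‖r‖ ≤ 1) : ‖R.prod‖ ≤ 1 := by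
  induction R using Multiset.induction_on with
  | empty => simp
  | cons a s ih =>
    rw [Multiset.prod_cons]
    calc ‖a * s.prod‖ = ‖a‖ * ‖s.prod‖ := norm_mul _ _
      _ ≤ 1 * 1 := by
          apply mul_le_mul (h a (mem_cons_self a s)) (ih fun r hr => h r (mem_cons_of_mem hr))
            (norm_nonneg _) zero_le_one
      _ = 1 := one_mul 1

lemma esymm_two_bound {R : Multiset ℂ} (hcard : Multiset.card R = 3)
    (h : ∀ r ∈ R, ‖r‖ ≤ 1) : ‖R.esymm 2‖ ≤ 3 := by
  rw [Multiset.esymm]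
  refine le_trans (norm_multiset_sum_le _) ?_
  have hcard2 : Multiset.card (Multiset.map Multiset.prod (R.powersetCard 2)) = 3 := by
    rw [Multiset.card_map, Multiset.card_powersetCard, hcard]; rfl
  calc (Multiset.map norm (Multiset.map Multiset.prod (R.powersetCard 2))).sum
      ≤ Multiset.card (Multiset.map norm (Multiset.map Multiset.prod (R.powersetCard 2))) • (1:ℝ) := by
        apply Multiset.sum_le_card_nsmul
        intro x hx
        simp only [Multiset.mem_map] at hx
        obtain ⟨t, ht, rfl⟩ := hx
        obtain ⟨t2, ht2, rfl⟩ := ht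
        exact prod_norm_le_one fun r hr => h r (Multiset.mem_of_le (Multiset.mem_powersetCard.mp ht2).1 hr)
    _ = 3 := by rw [Multiset.card_map, hcard2]; norm_num


lemma spectral_bounds (M : Matrix (Fin 3) (Fin 3) ℂ)
    (hs : ∀ μ ∈ spectrum ℂ M, ‖μ‖ < 1) : ‖q3 M‖ ≤ 3 ∧ ‖M.det‖ ≤ 1 := by
  have hmonic := M.charpoly_monic
  have hdeg : M.charpoly.natDegree = 3 := by
    rw [Matrix.charpoly_natDegree_eq_dim]; simp
  have hsplits : M.charpoly.Splits := IsAlgClosed.splits _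
  have hroots : ∀ r ∈ M.charpoly.roots, ‖r‖ ≤ 1 := by
    intro r hr
    have : M.charpoly.IsRoot r := isRoot_of_mem_roots hr
    exact le_of_lt (hs r (root_mem_spectrum M r this))
  have hcard : Multiset.card M.charpoly.roots = 3 := by
    rw [splits_iff_card_roots.mp hsplits, hdeg]
  constructor
  · have h1 : M.charpoly.coeff 1 =
        M.charpoly.leadingCoeff * (-1) ^ (M.charpoly.natDegree - 1)
          * M.charpoly.roots.esymm (M.charpoly.natDegree - 1) :=
      Polynomial.coeff_eq_esymm_roots_of_splits hsplits (by rw [hdeg]; norm_num)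
    rw [coeff_one_charpoly, hmonic.leadingCoeff, hdeg] at h1
    norm_num at h1
    rw [h1]
    exact esymm_two_bound hcard hroots
  · rw [Matrix.det_eq_prod_roots_charpoly]
    exact prod_norm_le_one hroots


set_option maxHeartbeats 1000000 in
lemma key_ineq (α : ℂ) (φ : ℂ → Matrix (Fin 3) (Fin 3) ℂ) (hα : α ≠ 0)
    (hdiff : ∀ i j : Fin 3, DifferentiableOn ℂ (fun ζ => φ ζ i j) (Metric.ball 0 1))
    (hq : ∀ ζ ∈ Metric.ball (0:ℂ) 1, ‖q3 (φ ζ)‖ ≤ 3)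
    (hdet : ∀ ζ ∈ Metric.ball (0:ℂ) 1, ‖(φ ζ).det‖ ≤ 1)
    (h0 : φ 0 = !![0, 0, 0; 0, 0, 1; 0, 0, 0])
    (hd : ∀ i j : Fin 3, deriv (fun ζ => φ ζ i j) 0
      = (!![1, 0, 0; 0, -1, 0; 0, 0, 0] : Matrix (Fin 3) (Fin 3) ℂ) i j / α) :
    1 ≤ ‖α‖ ^ 3 + 3 * ‖α‖ ^ 2 := by
  have hball : Metric.ball (0:ℂ) 1 ∈ nhds (0:ℂ) := isOpen_ball.mem_nhds (by simp)
  set R : Fin 3 → Fin 3 → ℂ → ℂ := fun i j => dslope (dslope (fun ζ => φ ζ i j) 0) 0 with hR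
  have hRdiff : ∀ i j : Fin 3, DifferentiableOn ℂ (R i j) (Metric.ball 0 1) := fun i j =>
    (Complex.differentiableOn_dslope hball).mpr
      ((Complex.differentiableOn_dslope hball).mpr (hdiff i j))
  have hexp : ∀ (i j : Fin 3) (ζ : ℂ), φ ζ i j
      = (!![0, 0, 0; 0, 0, 1; 0, 0, 0] : Matrix (Fin 3) (Fin 3) ℂ) i j
        + ζ * ((!![1, 0, 0; 0, -1, 0; 0, 0, 0] : Matrix (Fin 3) (Fin 3) ℂ) i j / α)
        + ζ ^ 2 * R i j ζ := by
    intro i j ζ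
    have h1 := sub_smul_dslope (fun ζ => φ ζ i j) 0 ζ
    have h2 := sub_smul_dslope (dslope (fun ζ => φ ζ i j) 0) 0 ζ
    rw [sub_zero, smul_eq_mul] at h1 h2
    have h3 : dslope (fun ζ => φ ζ i j) 0 0 = deriv (fun ζ => φ ζ i j) 0 :=
      dslope_same _ _
    have h4 : φ ζ i j = φ 0 i j + ζ * dslope (fun ζ => φ ζ i j) 0 ζ := by
      rw [h1]; ring
    rw [h4, h0]
    have h5 : dslope (fun ζ => φ ζ i j) 0 ζ
        = deriv (fun ζ => φ ζ i j) 0 + ζ * R i j ζ := by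
      rw [← h3, hR]; rw [h2]; ring
    rw [h5, hd i j]; ring
  have e00 : ∀ ζ : ℂ, φ ζ 0 0 = ζ * (1 / α) + ζ ^ 2 * R 0 0 ζ := fun ζ => by
    have := hexp 0 0 ζ; simpa using this
  have e01 : ∀ ζ : ℂ, φ ζ 0 1 = ζ ^ 2 * R 0 1 ζ := fun ζ => by
    have := hexp 0 1 ζ; simpa using this
  have e02 : ∀ ζ : ℂ, φ ζ 0 2 = ζ ^ 2 * R 0 2 ζ := fun ζ => by
    have := hexp 0 2 ζ; simpa using this
  have e10 : ∀ ζ : ℂ, φ ζ 1 0 = ζ ^ 2 * R 1 0 ζ := fun ζ => by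
    have := hexp 1 0 ζ; simpa using this
  have e11 : ∀ ζ : ℂ, φ ζ 1 1 = ζ * (-1 / α) + ζ ^ 2 * R 1 1 ζ := fun ζ => by
    have := hexp 1 1 ζ; simpa using this
  have e12 : ∀ ζ : ℂ, φ ζ 1 2 = 1 + ζ ^ 2 * R 1 2 ζ := fun ζ => by
    have := hexp 1 2 ζ; simpa using this
  have e20 : ∀ ζ : ℂ, φ ζ 2 0 = ζ ^ 2 * R 2 0 ζ := fun ζ => by
    have := hexp 2 0 ζ; simpa [Matrix.vecHead, Matrix.vecTail] using this
  have e21 : ∀ ζ : ℂ, φ ζ 2 1 = ζ ^ 2 * R 2 1 ζ := fun ζ => by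
    have := hexp 2 1 ζ; simpa [Matrix.vecHead, Matrix.vecTail] using this
  have e22 : ∀ ζ : ℂ, φ ζ 2 2 = ζ ^ 2 * R 2 2 ζ := fun ζ => by
    have := hexp 2 2 ζ; simpa [Matrix.vecHead, Matrix.vecTail] using this
  set W : ℂ → ℂ := fun ζ =>
    α * (R 0 1 ζ * R 2 0 ζ - R 0 0 ζ * R 2 1 ζ)
      + α⁻¹ * (R 0 0 ζ - R 1 1 ζ - R 2 2 ζ)
      + ζ * (2 * R 0 2 ζ * R 2 0 ζ + R 0 1 ζ * R 1 0 ζ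
          - 2 * R 0 0 ζ * R 2 2 ζ - R 0 0 ζ * R 1 1 ζ)
      + ζ ^ 2 * α * (R 0 0 ζ * R 1 1 ζ * R 2 2 ζ - R 0 0 ζ * R 1 2 ζ * R 2 1 ζ
          - R 0 1 ζ * R 1 0 ζ * R 2 2 ζ + R 0 1 ζ * R 1 2 ζ * R 2 0 ζ
          + R 0 2 ζ * R 1 0 ζ * R 2 1 ζ - R 0 2 ζ * R 1 1 ζ * R 2 0 ζ) with hW
  set G : ℂ → ℂ := fun ζ => α⁻¹ ^ 2 + ζ * W ζ with hG
  have hGid : ∀ ζ : ℂ, ζ ^ 3 * G ζ = α * (φ ζ).det - ζ * q3 (φ ζ) := by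
    intro ζ
    rw [Matrix.det_fin_three]
    simp only [q3, hG, hW]
    rw [e00, e01, e02, e10, e11, e12, e20, e21, e22]
    field_simp
    ring
  have hWdiff : DifferentiableOn ℂ W (Metric.ball 0 1) := by
    rw [hW]
    have h00 := hRdiff 0 0
    have h01 := hRdiff 0 1
    have h02 := hRdiff 0 2
    have h10 := hRdiff 1 0
    have h11 := hRdiff 1 1
    have h12 := hRdiff 1 2
    have h20 := hRdiff 2 0
    have h21 := hRdiff 2 1
    have h22 := hRdiff 2 2
    fun_prop
  have hGdiff : DifferentiableOn ℂ G (Metric.ball 0 1) := by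
    rw [hG]
    exact (differentiableOn_const _).add (differentiableOn_id.mul hWdiff)
  have hG0 : G 0 = α⁻¹ ^ 2 := by rw [hG]; simp
  have hρbound : ∀ ρ : ℝ, 0 < ρ → ρ < 1 → ‖α⁻¹‖ ^ 2 ≤ (‖α‖ + 3) / ρ ^ 3 := by
    intro ρ hρ0 hρ1
    have hne : ρ ≠ 0 := ne_of_gt hρ0
    have hsub : Metric.closedBall (0:ℂ) ρ ⊆ Metric.ball 0 1 :=
      Metric.closedBall_subset_ball hρ1
    have hdc : DiffContOnCl ℂ G (Metric.ball 0 ρ) := by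
      refine ⟨hGdiff.mono (Metric.ball_subset_ball (le_of_lt hρ1)), ?_⟩
      rw [closure_ball (0:ℂ) hne]
      exact (hGdiff.mono hsub).continuousOn
    have hfr : ∀ z ∈ frontier (Metric.ball (0:ℂ) ρ), ‖G z‖ ≤ (‖α‖ + 3) / ρ ^ 3 := by
      intro z hz
      rw [frontier_ball (0:ℂ) hne, mem_sphere_iff_norm, sub_zero] at hz
      have hzball : z ∈ Metric.ball (0:ℂ) 1 := by
        rw [Metric.mem_ball, dist_zero_right, hz]; exact hρ1
      have h1 : ‖z ^ 3 * G z‖ ≤ ‖α‖ + 3 := by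
        rw [hGid z]
        calc ‖α * (φ z).det - z * q3 (φ z)‖
            ≤ ‖α * (φ z).det‖ + ‖z * q3 (φ z)‖ := norm_sub_le _ _
          _ = ‖α‖ * ‖(φ z).det‖ + ‖z‖ * ‖q3 (φ z)‖ := by rw [norm_mul, norm_mul]
          _ ≤ ‖α‖ * 1 + 1 * 3 := by
              gcongr
              · exact hdet z hzball
              · rw [hz]; exact le_of_lt hρ1
              · exact hq z hzball
          _ = ‖α‖ + 3 := by ring
      have h2 : ‖z ^ 3 * G z‖ = ρ ^ 3 * ‖G z‖ := by
        rw [norm_mul, norm_pow, hz]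
      rw [h2] at h1
      rw [div_eq_mul_inv]
      calc ‖G z‖ = ρ ^ 3 * ‖G z‖ * (ρ ^ 3)⁻¹ := by
            field_simp
        _ ≤ (‖α‖ + 3) * (ρ ^ 3)⁻¹ := by
            gcongr
    have h0cl : (0:ℂ) ∈ closure (Metric.ball (0:ℂ) ρ) :=
      subset_closure (Metric.mem_ball_self hρ0)
    have := Complex.norm_le_of_forall_mem_frontier_norm_le Metric.isBounded_ball hdc hfr h0cl
    rw [hG0, norm_pow] at this
    exact this
  have hlim : ‖α⁻¹‖ ^ 2 ≤ ‖α‖ + 3 := by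
    have htend : Filter.Tendsto (fun ρ : ℝ => (‖α‖ + 3) / ρ ^ 3)
        (nhdsWithin 1 (Set.Iio 1)) (nhds ((‖α‖ + 3) / 1 ^ 3)) := by
      apply Filter.Tendsto.mono_left _ nhdsWithin_le_nhds
      exact (continuousAt_const.div ((continuous_pow 3).continuousAt) (by norm_num)).tendsto
    have hev : ∀ᶠ ρ in nhdsWithin (1:ℝ) (Set.Iio 1), ‖α⁻¹‖ ^ 2 ≤ (‖α‖ + 3) / ρ ^ 3 := by
      filter_upwards [Ioo_mem_nhdsLT_of_mem (Set.mem_Ioc.mpr ⟨(by norm_num : (0:ℝ) < 1), le_refl (1:ℝ)⟩)]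
        with ρ hρ
      exact hρbound ρ hρ.1 hρ.2
    have := ge_of_tendsto htend hev
    simpa using this
  have hpos : 0 < ‖α‖ := norm_pos_iff.mpr hα
  rw [norm_inv] at hlim
  have h2 : (1:ℝ) ≤ (‖α‖ + 3) * ‖α‖ ^ 2 := by
    have := mul_le_mul_of_nonneg_right hlim (le_of_lt (pow_pos hpos 2))
    rw [inv_pow, inv_mul_cancel₀ (ne_of_gt (pow_pos hpos 2))] at this
    linarith
  nlinarith [h2]



noncomputable def KobS : Set ℝ := {x : ℝ | ∃ s : ℂ,
    x = max (Real.sqrt (‖s - 1‖ / 3)) (‖s‖ ^ ((1 : ℝ) / 3))}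

lemma KobS_nonempty : KobS.Nonempty :=
  ⟨_, ⟨0, rfl⟩⟩

lemma KobS_nonneg : ∀ x ∈ KobS, (0:ℝ) ≤ x := by
  rintro x ⟨s, rfl⟩
  exact le_trans (Real.sqrt_nonneg _) (le_max_left _ _)

lemma KobS_bddBelow : BddBelow KobS := ⟨0, KobS_nonneg⟩

lemma KobS_lb : ∀ x ∈ KobS, Real.sqrt (1/6) ≤ x := by
  rintro x ⟨s, rfl⟩
  rcases le_or_gt (1/2 : ℝ) ‖s‖ with h | h
  · refine le_trans ?_ (le_max_right _ _)
    have h1 : Real.sqrt (1/6) ≤ 1/2 := by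
      rw [show (1/6 : ℝ) = 1/6 from rfl]
      calc Real.sqrt (1/6) ≤ Real.sqrt ((1/2)^2) := by
            apply Real.sqrt_le_sqrt; norm_num
        _ = 1/2 := Real.sqrt_sq (by norm_num)
    have h2 : (1/2 : ℝ) ≤ (1/2 : ℝ) ^ ((1:ℝ)/3) := by
      nth_rewrite 1 [show (1/2 : ℝ) = (1/2 : ℝ) ^ (1:ℝ) from (Real.rpow_one _).symm]
      exact Real.rpow_le_rpow_of_exponent_ge (by norm_num) (by norm_num) (by norm_num)
    have h3 : (1/2 : ℝ) ^ ((1:ℝ)/3) ≤ ‖s‖ ^ ((1:ℝ)/3) :=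
      Real.rpow_le_rpow (by norm_num) h (by norm_num)
    linarith
  · refine le_trans ?_ (le_max_left _ _)
    have h1 : (1:ℝ) ≤ ‖s‖ + ‖s - 1‖ := by
      calc (1:ℝ) = ‖s - (s - 1)‖ := by norm_num
        _ ≤ ‖s‖ + ‖s - 1‖ := norm_sub_le _ _
    have h2 : (1/2 : ℝ) ≤ ‖s - 1‖ := by linarith
    apply Real.sqrt_le_sqrt
    linarith

lemma KobS_sInf_pos : 0 < sInf KobS :=
  lt_of_lt_of_le (Real.sqrt_pos.mpr (by norm_num)) (le_csInf KobS_nonempty KobS_lb)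

lemma member_le (r : ℝ) (hr : 0 < r) (hkey : 1 ≤ r ^ 3 + 3 * r ^ 2) : sInf KobS ≤ r := by
  set m : ℝ := min 1 (r ^ 3) with hm
  have hm0 : 0 ≤ m := le_min (by norm_num) (by positivity)
  have hm1 : m ≤ 1 := min_le_left _ _
  have hnorm1 : ‖((m:ℂ)) - 1‖ = 1 - m := by
    rw [show ((m:ℂ) - 1) = ((m - 1 : ℝ) : ℂ) by push_cast; ring, Complex.norm_real,
      Real.norm_eq_abs, abs_of_nonpos (by linarith)]
    ring
  have hnorm2 : ‖((m:ℂ))‖ = m := by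
    rw [Complex.norm_real, Real.norm_eq_abs, abs_of_nonneg hm0]
  have h1 : Real.sqrt (‖((m:ℂ)) - 1‖ / 3) ≤ r := by
    rw [hnorm1]
    rcases le_total (r ^ 3) 1 with h | h
    · have : m = r ^ 3 := min_eq_right h
      rw [this]
      calc Real.sqrt ((1 - r ^ 3)/3) ≤ Real.sqrt (r ^ 2) := by
            apply Real.sqrt_le_sqrt; linarith
        _ = r := Real.sqrt_sq hr.le
    · have : m = 1 := min_eq_left h
      rw [this]
      simp [Real.sqrt_nonneg, hr.le]
  have h2 : ‖((m:ℂ))‖ ^ ((1:ℝ)/3) ≤ r := by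
    rw [hnorm2]
    rcases le_total (r ^ 3) 1 with h | h
    · have : m = r ^ 3 := min_eq_right h
      rw [this, show (r ^ 3 : ℝ) = r ^ ((3:ℕ):ℝ) from (Real.rpow_natCast r 3).symm,
        ← Real.rpow_mul hr.le]
      norm_num
    · have h1r : (1:ℝ) ≤ r := by nlinarith
      have : m = 1 := min_eq_left h
      rw [this, Real.one_rpow]
      exact h1r
  have : max (Real.sqrt (‖((m:ℂ)) - 1‖ / 3)) (‖((m:ℂ))‖ ^ ((1:ℝ)/3)) ≤ r := max_le h1 h2
  exact le_trans (csInf_le KobS_bddBelow ⟨(m:ℂ), rfl⟩) this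


theorem kobayashi_positive_at_E23 (Atil Xtil : Matrix (Fin 3) (Fin 3) ℂ)
    (hA : Atil = !![0, 0, 0; 0, 0, 1; 0, 0, 0])
    (hX : Xtil = !![1, 0, 0; 0, -1, 0; 0, 0, 0]) :
    -- no entire curve in the spectral ball with this 1-jet
    (¬ ∃ φ : ℂ → Matrix (Fin 3) (Fin 3) ℂ,
        (∀ i j : Fin 3, Differentiable ℂ fun ζ => φ ζ i j) ∧
        (∀ ζ : ℂ, ∀ μ ∈ spectrum ℂ (φ ζ), ‖μ‖ < 1) ∧
        φ 0 = Atil ∧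
        (∀ i j : Fin 3, deriv (fun ζ => φ ζ i j) 0 = Xtil i j)) ∧
    -- the lower bound min_{s ∈ ℂ} max{(|s−1|/3)^{1/2}, |s|^{1/3}} is positive
    0 < sInf {x : ℝ | ∃ s : ℂ,
        x = max (Real.sqrt (‖s - 1‖ / 3)) (‖s‖ ^ ((1 : ℝ) / 3))} ∧
    -- and it bounds from below the Kobayashi–Royden pseudometric of the spectral ball
    ∀ r : ℝ, (∃ α : ℂ, ‖α‖ = r ∧
        ∃ φ : ℂ → Matrix (Fin 3) (Fin 3) ℂ,
          (∀ i j : Fin 3, DifferentiableOn ℂ (fun ζ => φ ζ i j) (Metric.ball 0 1)) ∧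
          (∀ ζ ∈ Metric.ball (0 : ℂ) 1, ∀ μ ∈ spectrum ℂ (φ ζ), ‖μ‖ < 1) ∧
          φ 0 = Atil ∧
          (∀ i j : Fin 3, α * deriv (fun ζ => φ ζ i j) 0 = Xtil i j)) →
      sInf {x : ℝ | ∃ s : ℂ,
        x = max (Real.sqrt (‖s - 1‖ / 3)) (‖s‖ ^ ((1 : ℝ) / 3))} ≤ r := by
  subst hA hX
  have hthird : ∀ r : ℝ, (∃ α : ℂ, ‖α‖ = r ∧
      ∃ φ : ℂ → Matrix (Fin 3) (Fin 3) ℂ,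
        (∀ i j : Fin 3, DifferentiableOn ℂ (fun ζ => φ ζ i j) (Metric.ball 0 1)) ∧
        (∀ ζ ∈ Metric.ball (0 : ℂ) 1, ∀ μ ∈ spectrum ℂ (φ ζ), ‖μ‖ < 1) ∧
        φ 0 = !![0, 0, 0; 0, 0, 1; 0, 0, 0] ∧
        (∀ i j : Fin 3, α * deriv (fun ζ => φ ζ i j) 0
          = (!![1, 0, 0; 0, -1, 0; 0, 0, 0] : Matrix (Fin 3) (Fin 3) ℂ) i j)) →
      sInf KobS ≤ r := by
    rintro r ⟨α, hrα, φ, hdiff, hspec, h0, hd⟩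
    have h1 : α * deriv (fun ζ => φ ζ 0 0) 0 = 1 := by
      have := hd 0 0; simpa using this
    have hα : α ≠ 0 := by
      rintro rfl; rw [zero_mul] at h1; exact one_ne_zero h1.symm
    have hd' : ∀ i j : Fin 3, deriv (fun ζ => φ ζ i j) 0
        = (!![1, 0, 0; 0, -1, 0; 0, 0, 0] : Matrix (Fin 3) (Fin 3) ℂ) i j / α := by
      intro i j
      rw [eq_div_iff hα, mul_comm]
      exact hd i j
    have hq : ∀ ζ ∈ Metric.ball (0:ℂ) 1, ‖q3 (φ ζ)‖ ≤ 3 :=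
      fun ζ hz => (spectral_bounds (φ ζ) (hspec ζ hz)).1
    have hdet : ∀ ζ ∈ Metric.ball (0:ℂ) 1, ‖(φ ζ).det‖ ≤ 1 :=
      fun ζ hz => (spectral_bounds (φ ζ) (hspec ζ hz)).2
    have hkey := key_ineq α φ hα hdiff hq hdet h0 hd'
    have hrpos : 0 < r := hrα ▸ (norm_pos_iff.mpr hα)
    exact member_le r hrpos (by rw [← hrα]; exact hkey)
  refine ⟨?_, KobS_sInf_pos, hthird⟩
  rintro ⟨φ, hdiff, hspec, h0, hd⟩
  set t : ℝ := sInf KobS / 2 with hts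
  have ht : 0 < t := half_pos KobS_sInf_pos
  have htC : ((t:ℝ):ℂ) ≠ 0 := Complex.ofReal_ne_zero.mpr (ne_of_gt ht)
  have hle : sInf KobS ≤ t := by
    apply hthird t
    refine ⟨((t:ℝ):ℂ), ?_, fun ζ => φ (ζ / t), ?_, ?_, ?_, ?_⟩
    · rw [Complex.norm_real, Real.norm_eq_abs, abs_of_pos ht]
    · intro i j
      exact ((hdiff i j).comp (differentiable_id.div_const _)).differentiableOn
    · intro ζ _ μ hμ
      exact hspec (ζ / t) μ hμ
    · simp [h0]
    · intro i j
      have hf : HasDerivAt (fun z => φ z i j)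
          ((!![1, 0, 0; 0, -1, 0; 0, 0, 0] : Matrix (Fin 3) (Fin 3) ℂ) i j) ((0:ℂ) / (t:ℂ)) := by
        have h1 := ((hdiff i j) (0:ℂ)).hasDerivAt
        rw [hd i j] at h1
        rw [zero_div]
        exact h1
      have hg : HasDerivAt (fun ζ : ℂ => ζ / (t:ℂ)) (1 / (t:ℂ)) 0 :=
        (hasDerivAt_id (0:ℂ)).div_const _
      have hcomp := hf.comp (0:ℂ) hg
      have hder : deriv (fun ζ : ℂ => φ (ζ / t) i j) 0
          = (!![1, 0, 0; 0, -1, 0; 0, 0, 0] : Matrix (Fin 3) (Fin 3) ℂ) i j * (1 / (t:ℂ)) :=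
        hcomp.deriv
      rw [hder]
      field_simp
  linarith [KobS_sInf_pos]
end

section
/- Let r > 0, m ∈ ℕ, and P : r𝔻 → GL_n(ℂ) holomorphic. Then there exists an entire map P̃ : ℂ → GL_n(ℂ) of the form P̃(ζ) = P(0)exp(P_1(ζ)) with P_1 a matrix-valued polynomial, P_1(0) = 0, such that P̃(ζ) = P(ζ) + o(ζ^m) and P̃(ζ)^{−1} = P(ζ)^{−1} + o(ζ^m) as ζ → 0. In particular P̃(ζ) is invertible for every ζ ∈ ℂ. -/
open Filter
open scoped ENNReal

open NormedSpace in
/-- A local analytic logarithm near `1` in a Banach algebra. -/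
lemma exists_local_log (A : Type*) [NormedRing A] [NormedAlgebra ℂ A] [CompleteSpace A] :
    ∃ log : A → A, AnalyticAt ℂ log 1 ∧ log 1 = 0 ∧
      ∀ᶠ y in nhds (1 : A), exp (log y) = y := by
  have hstrict : HasStrictFDerivAt (exp)
      ((ContinuousLinearEquiv.refl ℂ A : A ≃L[ℂ] A) : A →L[ℂ] A) 0 := by
    exact (hasStrictFDerivAt_exp_zero (𝕂 := ℂ) (𝔸 := A))
  let e := hstrict.toOpenPartialHomeomorph (exp)
  have hcoe : (e : A → A) = exp := hstrict.toOpenPartialHomeomorph_coe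
  have hmem : (0 : A) ∈ e.source := hstrict.mem_toOpenPartialHomeomorph_source
  have hexp : HasFPowerSeriesAt (e : A → A) (expSeries ℂ A) 0 := by
    rw [hcoe]; exact exp_hasFPowerSeriesAt_zero
  have hcoeff : expSeries ℂ A 1 =
      (continuousMultilinearCurryFin1 ℂ A A).symm
        ((ContinuousLinearEquiv.refl ℂ A : A ≃L[ℂ] A) : A →L[ℂ] A) := by
    ext x
    have := NormedSpace.expSeries_apply_eq (𝕂 := ℂ) (x 0) 1
    rw [show x = fun _ => x 0 from funext fun i => by fin_cases i; rfl]
    simp [this, Nat.factorial]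
  have hsymm := e.hasFPowerSeriesAt_symm hmem hexp hcoeff
  have he0 : e 0 = (1 : A) := by rw [hcoe, exp_zero]
  refine ⟨e.symm, ?_, ?_, ?_⟩
  · rw [← he0]; exact ⟨_, hsymm⟩
  · rw [← he0]; exact e.left_inv hmem
  · have : e.target ∈ nhds (1 : A) := by
      rw [← he0]; exact e.open_target.mem_nhds (e.map_source hmem)
    filter_upwards [this] with y hy
    rw [← hcoe]; exact e.right_inv hy

private lemma norm_pow_succ_isLittleO (m : ℕ) :
    (fun y : ℂ => (‖y‖ : ℝ) ^ (m + 1)) =o[nhds 0] fun y : ℂ => y ^ m := by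
  rw [Asymptotics.isLittleO_iff]
  intro c hc
  filter_upwards [Metric.ball_mem_nhds (0 : ℂ) hc] with y hy
  rw [Metric.mem_ball, dist_zero_right] at hy
  have h1 : ‖y‖ ^ (m + 1) = ‖y‖ * ‖y‖ ^ m := by ring
  rw [Real.norm_eq_abs, abs_of_nonneg (by positivity), norm_pow, h1]
  exact mul_le_mul_of_nonneg_right hy.le (by positivity)

theorem entire_approximation_of_invertible_frame (n : ℕ) (r : ℝ) (hr : 0 < r) (m : ℕ)
    (P : ℂ → Matrix (Fin n) (Fin n) ℂ)
    (hP : ∀ i j : Fin n, DifferentiableOn ℂ (fun ζ => P ζ i j) (Metric.ball 0 r))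
    (hPinv : ∀ ζ ∈ Metric.ball (0 : ℂ) r, IsUnit (P ζ)) :
    ∃ P1 : ℂ → Matrix (Fin n) (Fin n) ℂ,
      -- `P1` is a matrix-valued polynomial with `P1 0 = 0`
      (∃ C : ℕ → Matrix (Fin n) (Fin n) ℂ,
        P1 = fun ζ => ∑ k ∈ Finset.Icc 1 m, ζ ^ k • C k) ∧
      P1 0 = 0 ∧
      -- `P̃(ζ) := P(0) exp (P1 ζ)` is entire with invertible values
      (∀ i j : Fin n,
        Differentiable ℂ fun ζ => (P 0 * NormedSpace.exp (P1 ζ)) i j) ∧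
      (∀ ζ : ℂ, IsUnit (P 0 * NormedSpace.exp (P1 ζ))) ∧
      -- `P̃(ζ) = P(ζ) + o(ζ^m)`
      (∀ i j : Fin n,
        Tendsto (fun ζ : ℂ => ((P 0 * NormedSpace.exp (P1 ζ) - P ζ) i j) / ζ ^ m)
          (nhdsWithin 0 {(0 : ℂ)}ᶜ) (nhds 0)) ∧
      -- `P̃(ζ)⁻¹ = P(ζ)⁻¹ + o(ζ^m)`
      (∀ i j : Fin n,
        Tendsto (fun ζ : ℂ => (((P 0 * NormedSpace.exp (P1 ζ))⁻¹ - (P ζ)⁻¹) i j) / ζ ^ m)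
          (nhdsWithin 0 {(0 : ℂ)}ᶜ) (nhds 0)) := by
  classical
  letI : NormedRing (Matrix (Fin n) (Fin n) ℂ) := Matrix.linftyOpNormedRing
  letI : NormedAlgebra ℂ (Matrix (Fin n) (Fin n) ℂ) := Matrix.linftyOpNormedAlgebra
  -- basic invertibility facts at `0`
  have h0mem : (0 : ℂ) ∈ Metric.ball (0 : ℂ) r := Metric.mem_ball_self hr
  have hP0 : IsUnit (P 0) := hPinv 0 h0mem
  have hP0d : IsUnit (P 0).det := (Matrix.isUnit_iff_isUnit_det _).1 hP0
  have hP0inv : P 0 * (P 0)⁻¹ = 1 := Matrix.mul_nonsing_inv _ hP0d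
  have hP0inv' : (P 0)⁻¹ * P 0 = 1 := Matrix.nonsing_inv_mul _ hP0d
  -- the continuous linear equivalence with the pi type
  let φ : Matrix (Fin n) (Fin n) ℂ ≃L[ℂ] (Fin n → Fin n → ℂ) :=
    (Matrix.ofLinearEquiv ℂ).symm.toContinuousLinearEquiv
  -- `P` is analytic at `0` as a matrix-valued map
  have hPdiff : DifferentiableOn ℂ P (Metric.ball 0 r) := by
    have h1 : DifferentiableOn ℂ (fun ζ => (fun i j => P ζ i j)) (Metric.ball 0 r) :=
      differentiableOn_pi.2 fun i => differentiableOn_pi.2 fun j => hP i j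
    exact φ.symm.differentiable.comp_differentiableOn h1
  have hPan : AnalyticAt ℂ P 0 := hPdiff.analyticAt (Metric.ball_mem_nhds _ hr)
  -- `Q`
  set Q : ℂ → Matrix (Fin n) (Fin n) ℂ := fun ζ => (P 0)⁻¹ * P ζ with hQdef
  have hQan : AnalyticAt ℂ Q 0 := analyticAt_const.mul hPan
  have hQ0 : Q 0 = 1 := hP0inv'
  -- local logarithm
  obtain ⟨lg, hlgan, hlg1, hexplg⟩ := exists_local_log (Matrix (Fin n) (Fin n) ℂ)
  set L : ℂ → Matrix (Fin n) (Fin n) ℂ := fun ζ => lg (Q ζ) with hLdef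
  have hLan : AnalyticAt ℂ L 0 := by
    have h1 : AnalyticAt ℂ lg (Q 0) := hQ0 ▸ hlgan
    exact h1.comp hQan
  have hL0 : L 0 = 0 := by rw [hLdef]; simp only [hQ0, hlg1]
  have heq : ∀ᶠ ζ in nhds (0 : ℂ), NormedSpace.exp (L ζ) = Q ζ := by
    have hc : Tendsto Q (nhds 0) (nhds (1 : Matrix (Fin n) (Fin n) ℂ)) := by
      rw [← hQ0]; exact hQan.continuousAt.tendsto
    exact hc.eventually hexplg
  -- Taylor polynomial of `L`
  obtain ⟨p, hp⟩ := hLan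
  set C : ℕ → Matrix (Fin n) (Fin n) ℂ := fun k => p.coeff k with hCdef
  set P1 : ℂ → Matrix (Fin n) (Fin n) ℂ := fun ζ => ∑ k ∈ Finset.Icc 1 m, ζ ^ k • C k with hP1def
  have hP1diff : Differentiable ℂ P1 :=
    Differentiable.fun_sum fun k _ => (differentiable_pow k).smul_const _
  have hP10 : P1 0 = 0 := by
    rw [hP1def]
    refine Finset.sum_eq_zero fun k hk => ?_
    rw [Finset.mem_Icc] at hk
    rw [zero_pow (by omega), zero_smul]
  -- `L - P1 = o(ζ^m)`
  have hcoeff0 : p.coeff 0 = 0 := by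
    have h := hp.coeff_zero (fun _ => 1)
    rw [hL0] at h
    exact h
  have hrange : Finset.range (m + 1) = insert 0 (Finset.Icc 1 m) := by
    ext a; simp only [Finset.mem_range, Finset.mem_insert, Finset.mem_Icc]; omega
  have hps : ∀ y : ℂ, p.partialSum (m + 1) y = P1 y := by
    intro y
    rw [FormalMultilinearSeries.partialSum]
    calc ∑ k ∈ Finset.range (m + 1), p k (fun _ => y)
        = ∑ k ∈ Finset.range (m + 1), y ^ k • p.coeff k := by
          simp [FormalMultilinearSeries.apply_eq_pow_smul_coeff]
      _ = P1 y := by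
          rw [hrange, Finset.sum_insert (by simp), hcoeff0]
          simp [hP1def, hCdef]
  have hTL : (fun ζ : ℂ => L ζ - P1 ζ) =o[nhds 0] fun ζ : ℂ => ζ ^ m := by
    have hbig := hp.isBigO_sub_partialSum_pow (m + 1)
    have hbig' : (fun y : ℂ => L y - P1 y) =O[nhds 0] fun y : ℂ => ‖y‖ ^ (m + 1) := by
      simpa [hps] using hbig
    exact hbig'.trans_isLittleO (norm_pow_succ_isLittleO m)
  have hTL' : (fun ζ : ℂ => P1 ζ - L ζ) =o[nhds 0] fun ζ : ℂ => ζ ^ m := by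
    simpa [neg_sub] using hTL.neg_left
  -- exp is locally Lipschitz at 0
  obtain ⟨K, s, hs, hK⟩ :=
    (hasStrictFDerivAt_exp_zero (𝕂 := ℂ) (𝔸 := Matrix (Fin n) (Fin n) ℂ)).exists_lipschitzOnWith
  have hLtend : Tendsto L (nhds 0) (nhds 0) := by
    have := hp.continuousAt
    rwa [ContinuousAt, hL0] at this
  have hP1tend : Tendsto P1 (nhds 0) (nhds 0) := by
    have := hP1diff.continuous.continuousAt (x := (0 : ℂ))
    rwa [ContinuousAt, hP10] at this
  have key : ∀ (a b : ℂ → Matrix (Fin n) (Fin n) ℂ),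
      Tendsto a (nhds 0) (nhds 0) → Tendsto b (nhds 0) (nhds 0) →
      ((fun ζ : ℂ => a ζ - b ζ) =o[nhds 0] fun ζ : ℂ => ζ ^ m) →
      (fun ζ : ℂ => NormedSpace.exp (a ζ) - NormedSpace.exp (b ζ))
        =o[nhds 0] fun ζ : ℂ => ζ ^ m := by
    intro a b ha hb hab
    refine Asymptotics.IsBigO.trans_isLittleO ?_ hab
    rw [Asymptotics.isBigO_iff]
    refine ⟨K, ?_⟩
    filter_upwards [ha hs, hb hs] with ζ h1 h2
    have hd := hK.dist_le_mul _ h1 _ h2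
    rw [dist_eq_norm, dist_eq_norm] at hd
    exact hd
  have hu := key P1 L hP1tend hLtend hTL'
  have hv := key (fun ζ => -P1 ζ) (fun ζ => -L ζ) (by simpa using hP1tend.neg)
    (by simpa using hLtend.neg)
    (by
      have hfun : (fun ζ : ℂ => -P1 ζ - -L ζ) = fun ζ : ℂ => L ζ - P1 ζ := by
        funext ζ; abel
      rw [hfun]; exact hTL)
  -- entry extraction continuous linear maps
  let ψ : ∀ _ : Fin n, ∀ _ : Fin n, Matrix (Fin n) (Fin n) ℂ →L[ℂ] ℂ := fun i j =>
    (ContinuousLinearMap.proj j).comp ((ContinuousLinearMap.proj i).comp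
      (φ : Matrix (Fin n) (Fin n) ℂ →L[ℂ] (Fin n → Fin n → ℂ)))
  have hψ : ∀ i j (M : Matrix (Fin n) (Fin n) ℂ), ψ i j M = M i j := fun _ _ _ => rfl
  -- the two matrix-valued `o(ζ^m)` differences
  have h1o : (fun ζ : ℂ => P 0 * (NormedSpace.exp (P1 ζ) - NormedSpace.exp (L ζ)))
      =o[nhds 0] fun ζ : ℂ => ζ ^ m :=
    (((ContinuousLinearMap.mul ℂ (Matrix (Fin n) (Fin n) ℂ)) (P 0)).isBigO_comp
      _ _).trans_isLittleO hu
  have h2o : (fun ζ : ℂ => (NormedSpace.exp (-P1 ζ) - NormedSpace.exp (-L ζ)) * (P 0)⁻¹)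
      =o[nhds 0] fun ζ : ℂ => ζ ^ m :=
    (((ContinuousLinearMap.mul ℂ (Matrix (Fin n) (Fin n) ℂ)).flip ((P 0)⁻¹)).isBigO_comp
      _ _).trans_isLittleO hv
  -- the eventual identities
  have hPeq : ∀ᶠ ζ in nhds (0 : ℂ), P ζ = P 0 * NormedSpace.exp (L ζ) := by
    filter_upwards [heq] with ζ h1
    rw [h1, hQdef]
    rw [← Matrix.mul_assoc, hP0inv, Matrix.one_mul]
  have hPinveq : ∀ᶠ ζ in nhds (0 : ℂ), (P ζ)⁻¹ = NormedSpace.exp (-L ζ) * (P 0)⁻¹ := by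
    filter_upwards [hPeq] with ζ h1
    rw [h1, Matrix.mul_inv_rev, ← Matrix.exp_neg]
  have hinv1 : ∀ ζ : ℂ, (P 0 * NormedSpace.exp (P1 ζ))⁻¹ =
      NormedSpace.exp (-P1 ζ) * (P 0)⁻¹ := by
    intro ζ
    rw [Matrix.mul_inv_rev, ← Matrix.exp_neg]
  refine ⟨P1, ⟨C, hP1def⟩, hP10, ?_, ?_, ?_, ?_⟩
  · -- differentiability of entries
    intro i j
    have hdiff : Differentiable ℂ fun ζ : ℂ =>
        P 0 * NormedSpace.exp (P1 ζ) := by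
      have hexp : Differentiable ℂ (NormedSpace.exp :
          Matrix (Fin n) (Fin n) ℂ → Matrix (Fin n) (Fin n) ℂ) :=
        fun x => (NormedSpace.exp_analytic x).differentiableAt
      exact (hexp.comp hP1diff).const_mul _
    exact ((ψ i j).differentiable.comp hdiff :)
  · -- invertibility
    intro ζ
    exact hP0.mul (Matrix.isUnit_exp _)
  · -- first approximation
    intro i j
    have hsc : (fun ζ : ℂ =>
        (P 0 * (NormedSpace.exp (P1 ζ) - NormedSpace.exp (L ζ))) i j)
        =o[nhds 0] fun ζ : ℂ => ζ ^ m :=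
      ((ψ i j).isBigO_comp _ _).trans_isLittleO h1o
    have ht := hsc.tendsto_div_nhds_zero
    refine Tendsto.congr' ?_ (ht.mono_left nhdsWithin_le_nhds)
    filter_upwards [eventually_nhdsWithin_of_eventually_nhds hPeq] with ζ h1
    rw [h1, Matrix.mul_sub]
  · -- second approximation
    intro i j
    have hsc : (fun ζ : ℂ =>
        ((NormedSpace.exp (-P1 ζ) - NormedSpace.exp (-L ζ)) * (P 0)⁻¹) i j)
        =o[nhds 0] fun ζ : ℂ => ζ ^ m :=
      ((ψ i j).isBigO_comp _ _).trans_isLittleO h2o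
    have ht := hsc.tendsto_div_nhds_zero
    refine Tendsto.congr' ?_ (ht.mono_left nhdsWithin_le_nhds)
    filter_upwards [eventually_nhdsWithin_of_eventually_nhds hPinveq] with ζ h1
    rw [hinv1, h1, Matrix.sub_mul]
end
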